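/- arXiv:2602.18656 — 14 statements merged into one kernel-verified Lean document; each statement's English description precedes it below -/
import Mathlib

section
/- Let X be a random variable taking values in a countable set 𝒳 with probability mass function p₀, let a, b : 𝒳 → ℝ satisfy a(x) ≥ 0, b(x) ≥ 0 and a(x) + b(x) ≤ 1 for all x, and let U be uniformly distributed on [0,1] and independent of X. Define P(x,u) = a(x) + u·b(x). If Pr{P(X,U) ≤ t} = t for every t ∈ [0,1], then for every convex function h : [0,1] → ℝ one has E[h(a(X) + b(X)/2)] ≤ ∫₀¹ h(u) du. -/
open MeasureTheory
open Set
open scoped ENNReal NNReal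


lemma convex_ub {h : ℝ → ℝ} (hconv : ConvexOn ℝ (Icc (0:ℝ) 1) h) :
    ∀ t ∈ Icc (0:ℝ) 1, h t ≤ max (h 0) (h 1) := by
  intro t ht
  have h0 : (0:ℝ) ∈ Icc (0:ℝ) 1 := ⟨le_refl 0, zero_le_one⟩
  have h1 : (1:ℝ) ∈ Icc (0:ℝ) 1 := ⟨zero_le_one, le_refl 1⟩
  have := hconv.le_on_segment' h0 h1 (by linarith [ht.2] : (0:ℝ) ≤ 1 - t) ht.1 (by ring)
  simpa using this

lemma convex_lb {h : ℝ → ℝ} (hconv : ConvexOn ℝ (Icc (0:ℝ) 1) h) :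
    ∀ t ∈ Icc (0:ℝ) 1, 2 * h (1/2) - max (h 0) (h 1) ≤ h t := by
  intro t ht
  have ht' : (1 - t) ∈ Icc (0:ℝ) 1 := ⟨by linarith [ht.2], by linarith [ht.1]⟩
  have key := hconv.2 ht ht' (by norm_num : (0:ℝ) ≤ 1/2) (by norm_num : (0:ℝ) ≤ 1/2) (by norm_num)
  have hmid : (1/2 : ℝ) • t + (1/2 : ℝ) • (1 - t) = 1/2 := by simp only [smul_eq_mul]; ring
  rw [hmid] at key
  have := convex_ub hconv (1 - t) ht'
  simp only [smul_eq_mul] at key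
  linarith

lemma jensen_aux {a b : ℝ} (ha : 0 ≤ a) (hb : 0 < b) (hab : a + b ≤ 1)
    {h h' : ℝ → ℝ} (hconv : ConvexOn ℝ (Icc (0:ℝ) 1) h)
    (hh' : ∀ t ∈ Ioo (0:ℝ) 1, h' t = h t)
    (hmeas : Measurable h') (C : ℝ) (hC : ∀ t, |h' t| ≤ C) :
    h (a + b / 2) ≤ ∫ u in (0:ℝ)..1, h' (a + u * b) := by
  have hfmem : ∀ u ∈ Icc (0:ℝ) 1, a + u * b ∈ Icc (0:ℝ) 1 := by
    intro u hu
    constructor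
    · nlinarith [hu.1, hu.2]
    · nlinarith [hu.1, hu.2]
  -- integrability
  have hm1 : Measurable fun u : ℝ => h' (a + u * b) := hmeas.comp (by fun_prop)
  have hm2 : Measurable fun u : ℝ => h' (a + (1 - u) * b) := hmeas.comp (by fun_prop)
  have hint1 : IntervalIntegrable (fun u => h' (a + u * b)) volume 0 1 := by
    rw [intervalIntegrable_iff]
    haveI : IsFiniteMeasure (volume.restrict (Set.uIoc (0:ℝ) 1)) :=
      ⟨by rw [Measure.restrict_apply_univ]; exact measure_Ioc_lt_top⟩
    exact (integrable_const C).mono' hm1.aestronglyMeasurable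
      (Filter.Eventually.of_forall fun u => by rw [Real.norm_eq_abs]; exact hC _)
  have hint2 : IntervalIntegrable (fun u => h' (a + (1 - u) * b)) volume 0 1 := by
    rw [intervalIntegrable_iff]
    haveI : IsFiniteMeasure (volume.restrict (Set.uIoc (0:ℝ) 1)) :=
      ⟨by rw [Measure.restrict_apply_univ]; exact measure_Ioc_lt_top⟩
    exact (integrable_const C).mono' hm2.aestronglyMeasurable
      (Filter.Eventually.of_forall fun u => by rw [Real.norm_eq_abs]; exact hC _)
  -- null set where endpoints are hit
  set N : Set ℝ := {u : ℝ | a + u * b = 0 ∨ a + u * b = 1 ∨ a + (1 - u) * b = 0 ∨ a + (1 - u) * b = 1} with hN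
  have hNnull : volume N = 0 := by
    apply measure_mono_null (t := ({(0 - a)/b, (1 - a)/b, 1 - (0 - a)/b, 1 - (1 - a)/b} : Set ℝ))
    · intro u hu
      simp only [hN, mem_setOf_eq] at hu
      simp only [mem_insert_iff, mem_singleton_iff]
      rcases hu with h1 | h2 | h3 | h4
      · left; field_simp; linarith
      · right; left; field_simp; linarith
      · right; right; left; field_simp; ring_nf; ring_nf at h3; nlinarith [hb]
      · right; right; right; field_simp; ring_nf; ring_nf at h4; nlinarith [hb]
    · have : ({(0 - a)/b, (1 - a)/b, 1 - (0 - a)/b, 1 - (1 - a)/b} : Set ℝ).Countable := by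
        apply Set.Countable.insert; apply Set.Countable.insert; apply Set.Countable.insert
        exact Set.countable_singleton _
      exact this.measure_zero _
  -- a.e. pointwise bound on Icc 0 1
  have hae : ∀ᵐ u ∂(volume.restrict (Icc (0:ℝ) 1)),
      h (a + b / 2) ≤ (h' (a + u * b) + h' (a + (1 - u) * b)) / 2 := by
    have h1 : ∀ᵐ u ∂(volume.restrict (Icc (0:ℝ) 1)), u ∉ N :=
      ae_restrict_of_ae (measure_eq_zero_iff_ae_notMem.mp hNnull)
    have h3 : ∀ᵐ u ∂(volume.restrict (Icc (0:ℝ) 1)), u ∈ Icc (0:ℝ) 1 := ae_restrict_mem measurableSet_Icc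
    filter_upwards [h1, h3] with u hu1 hu3
    have hx : a + u * b ∈ Icc (0:ℝ) 1 := hfmem u hu3
    have hu3' : 1 - u ∈ Icc (0:ℝ) 1 := ⟨by linarith [hu3.2], by linarith [hu3.1]⟩
    have hy : a + (1 - u) * b ∈ Icc (0:ℝ) 1 := hfmem _ hu3'
    simp only [hN, mem_setOf_eq, not_or] at hu1
    have hxo : a + u * b ∈ Ioo (0:ℝ) 1 :=
      ⟨lt_of_le_of_ne hx.1 (Ne.symm hu1.1), lt_of_le_of_ne hx.2 hu1.2.1⟩
    have hyo : a + (1 - u) * b ∈ Ioo (0:ℝ) 1 :=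
      ⟨lt_of_le_of_ne hy.1 (Ne.symm hu1.2.2.1), lt_of_le_of_ne hy.2 hu1.2.2.2⟩
    rw [hh' _ hxo, hh' _ hyo]
    have key := hconv.2 hx hy (by norm_num : (0:ℝ) ≤ 1/2) (by norm_num : (0:ℝ) ≤ 1/2) (by norm_num)
    have hmid : (1/2 : ℝ) • (a + u * b) + (1/2 : ℝ) • (a + (1 - u) * b) = a + b / 2 := by
      simp only [smul_eq_mul]; ring
    rw [hmid] at key
    simp only [smul_eq_mul] at key
    linarith
  -- integrate
  have hintsum : IntervalIntegrable
      (fun u => (h' (a + u * b) + h' (a + (1 - u) * b)) / 2) volume 0 1 :=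
    (hint1.add hint2).div_const 2
  have hmono := intervalIntegral.integral_mono_ae_restrict zero_le_one
    (intervalIntegrable_const (c := h (a + b / 2))) hintsum hae
  have hconst : ∫ _ in (0:ℝ)..1, h (a + b / 2) = h (a + b / 2) := by simp
  have hrefl : ∫ u in (0:ℝ)..1, h' (a + (1 - u) * b) = ∫ u in (0:ℝ)..1, h' (a + u * b) := by
    have := intervalIntegral.integral_comp_sub_left (a := (0:ℝ)) (b := (1:ℝ))
      (fun u => h' (a + u * b)) 1
    norm_num at this
    exact this
  have hsplit : ∫ u in (0:ℝ)..1, (h' (a + u * b) + h' (a + (1 - u) * b)) / 2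
      = ((∫ u in (0:ℝ)..1, h' (a + u * b)) + ∫ u in (0:ℝ)..1, h' (a + (1 - u) * b)) / 2 := by
    rw [intervalIntegral.integral_div, intervalIntegral.integral_add hint1 hint2]
  rw [hconst, hsplit, hrefl] at hmono
  linarith


/-- If the randomized p-value `P(x,u) = a(x) + u·b(x)` is uniformly
distributed on `[0,1]` under the null (with `U ~ Uniform[0,1]` independent of `X`),
then the corresponding mid-p-value `a(X) + b(X)/2` is sub-uniform under the null:
`E₀[h(a(X) + b(X)/2)] ≤ ∫₀¹ h(u) du` for every convex `h : [0,1] → ℝ`. -/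
theorem stmt_0 {𝒳 : Type*} [Countable 𝒳]
    (p₀ : 𝒳 → ℝ) (hp₀ : ∀ x, 0 ≤ p₀ x) (hp₀sum : ∑' x, p₀ x = 1)
    (a b : 𝒳 → ℝ) (ha : ∀ x, 0 ≤ a x) (hb : ∀ x, 0 ≤ b x)
    (hab : ∀ x, a x + b x ≤ 1)
    (hunif : ∀ t ∈ Set.Icc (0:ℝ) 1,
      ∑' x, p₀ x * (volume {u : ℝ | u ∈ Set.Icc (0:ℝ) 1 ∧ a x + u * b x ≤ t}).toReal = t)
    (h : ℝ → ℝ) (hconv : ConvexOn ℝ (Set.Icc (0:ℝ) 1) h) :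
    ∑' x, p₀ x * h (a x + b x / 2) ≤ ∫ u in (0:ℝ)..1, h u := by
  classical
  have hps : Summable p₀ := by
    by_contra hs
    rw [tsum_eq_zero_of_not_summable hs] at hp₀sum
    norm_num at hp₀sum
  -- bounds on h
  set M : ℝ := max (h 0) (h 1) with hM
  set m : ℝ := 2 * h (1/2) - M with hm
  set C : ℝ := max M (-m) with hC
  have hCb : ∀ t ∈ Icc (0:ℝ) 1, |h t| ≤ C := by
    intro t ht
    rw [abs_le]
    constructor
    · have := convex_lb hconv t ht
      have : m ≤ h t := this
      have h2 : -C ≤ m := by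
        rw [hC]; have := neg_le_neg (le_max_right M (-m)); simpa using this
      linarith
    · exact le_trans (convex_ub hconv t ht) (le_max_left _ _)
  -- the measurable modification h'
  set h' : ℝ → ℝ := (Ioo (0:ℝ) 1).piecewise h (fun _ => h (1/2)) with hh'def
  have hh'eq : ∀ t ∈ Ioo (0:ℝ) 1, h' t = h t := fun t ht => Set.piecewise_eq_of_mem _ _ _ ht
  have hcontIoo : ContinuousOn h (Ioo (0:ℝ) 1) :=
    (hconv.subset Ioo_subset_Icc_self (convex_Ioo 0 1)).continuousOn isOpen_Ioo
  have hh'meas : Measurable h' :=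
    ContinuousOn.measurable_piecewise hcontIoo continuousOn_const measurableSet_Ioo
  have hhalf : (1/2 : ℝ) ∈ Icc (0:ℝ) 1 := by norm_num
  have hh'b : ∀ t, |h' t| ≤ C := by
    intro t
    by_cases ht : t ∈ Ioo (0:ℝ) 1
    · rw [hh'eq t ht]; exact hCb t (Ioo_subset_Icc_self ht)
    · rw [hh'def, Set.piecewise_eq_of_notMem _ _ _ ht]; exact hCb _ hhalf
  -- the measures
  set f : 𝒳 → ℝ → ℝ := fun x u => a x + u * b x with hf
  have hfmeas : ∀ x, Measurable (f x) := fun x => by fun_prop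
  set ν : 𝒳 → Measure ℝ := fun x => (volume.restrict (Icc (0:ℝ) 1)).map (f x) with hν
  set μ : Measure ℝ := Measure.sum (fun x => ENNReal.ofReal (p₀ x) • ν x) with hμdef
  have hIccfin : volume (Icc (0:ℝ) 1) = 1 := by
    rw [Real.volume_Icc]; norm_num
  have hνapp : ∀ x (s : Set ℝ), MeasurableSet s → ν x s = volume ((f x) ⁻¹' s ∩ Icc 0 1) := by
    intro x s hs
    rw [hν]
    rw [Measure.map_apply (hfmeas x) hs, Measure.restrict_apply ((hfmeas x) hs)]
  have hνIic : ∀ x t, ν x (Iic t) = volume {u : ℝ | u ∈ Icc (0:ℝ) 1 ∧ a x + u * b x ≤ t} := by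
    intro x t
    rw [hνapp x _ measurableSet_Iic]
    congr 1
    ext u
    simp only [mem_inter_iff, mem_preimage, mem_Iic, mem_setOf_eq, hf]
    tauto
  have hνIic_le : ∀ x t, ν x (Iic t) ≤ 1 := by
    intro x t
    rw [hνapp x _ measurableSet_Iic]
    calc volume ((f x) ⁻¹' Iic t ∩ Icc 0 1) ≤ volume (Icc (0:ℝ) 1) :=
          measure_mono inter_subset_right
      _ = 1 := hIccfin
  have hμapp : ∀ s : Set ℝ, MeasurableSet s →
      μ s = ∑' x, ENNReal.ofReal (p₀ x) * ν x s := by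
    intro s hs
    rw [hμdef, Measure.sum_apply _ hs]
    exact tsum_congr fun x => by rw [Measure.smul_apply, smul_eq_mul]
  -- μ of Iic t for t in [0,1]
  have hμIic_mem : ∀ t ∈ Icc (0:ℝ) 1, μ (Iic t) = ENNReal.ofReal t := by
    intro t ht
    rw [hμapp _ measurableSet_Iic]
    have : ∀ x, ENNReal.ofReal (p₀ x) * ν x (Iic t)
        = ENNReal.ofReal (p₀ x * (volume {u : ℝ | u ∈ Icc (0:ℝ) 1 ∧ a x + u * b x ≤ t}).toReal) := by
      intro x
      rw [hνIic, ENNReal.ofReal_mul (hp₀ x), ENNReal.ofReal_toReal]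
      rw [← hνIic]
      exact ne_top_of_le_ne_top (by norm_num) (hνIic_le x t)
    rw [tsum_congr this, ← ENNReal.ofReal_tsum_of_nonneg, hunif t ht]
    · intro x
      exact mul_nonneg (hp₀ x) ENNReal.toReal_nonneg
    · apply Summable.of_nonneg_of_le (fun x => mul_nonneg (hp₀ x) ENNReal.toReal_nonneg)
        (fun x => ?_) hps
      have h1 : (volume {u : ℝ | u ∈ Icc (0:ℝ) 1 ∧ a x + u * b x ≤ t}).toReal ≤ 1 := by
        rw [← hνIic]
        have := hνIic_le x t
        calc (ν x (Iic t)).toReal ≤ (1 : ℝ≥0∞).toReal :=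
          ENNReal.toReal_mono (by norm_num) this
          _ = 1 := by norm_num
      have := mul_le_mul_of_nonneg_left h1 (hp₀ x)
      linarith
  -- μ is a probability measure
  have hμuniv : μ univ = 1 := by
    rw [hμapp _ MeasurableSet.univ]
    have : ∀ x, ENNReal.ofReal (p₀ x) * ν x univ = ENNReal.ofReal (p₀ x) := by
      intro x
      rw [hνapp x _ MeasurableSet.univ]
      simp [hIccfin]
    rw [tsum_congr this, ← ENNReal.ofReal_tsum_of_nonneg hp₀ hps, hp₀sum, ENNReal.ofReal_one]
  haveI : IsFiniteMeasure μ := ⟨by rw [hμuniv]; norm_num⟩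
  -- identify μ with Lebesgue on [0,1]
  have hμeq : μ = volume.restrict (Icc (0:ℝ) 1) := by
    apply Measure.ext_of_Iic
    intro t
    rw [Measure.restrict_apply measurableSet_Iic]
    rcases lt_or_ge t 0 with htneg | ht0
    · have h1 : Iic t ∩ Icc (0:ℝ) 1 = ∅ := by
        ext u; simp only [mem_inter_iff, mem_Iic, mem_Icc, mem_empty_iff_false, iff_false]
        rintro ⟨h1, h2, h3⟩; linarith
      rw [h1, measure_empty, hμapp _ measurableSet_Iic]
      apply ENNReal.tsum_eq_zero.mpr
      intro x
      have : ν x (Iic t) = 0 := by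
        rw [hνIic]
        convert measure_empty (μ := volume)
        ext u
        simp only [mem_setOf_eq, mem_empty_iff_false, iff_false, not_and, mem_Icc]
        rintro ⟨h1, h2⟩ hle
        nlinarith [ha x, hb x]
      rw [this, mul_zero]
    rcases le_or_gt t 1 with ht1 | ht1
    · rw [hμIic_mem t ⟨ht0, ht1⟩]
      have : Iic t ∩ Icc (0:ℝ) 1 = Icc 0 t := by
        ext u; simp only [mem_inter_iff, mem_Iic, mem_Icc]
        constructor
        · rintro ⟨h1, h2, h3⟩; exact ⟨h2, h1⟩
        · rintro ⟨h1, h2⟩; exact ⟨h2, h1, le_trans h2 ht1⟩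
      rw [this, Real.volume_Icc, sub_zero]
    · have h1 : Iic t ∩ Icc (0:ℝ) 1 = Icc 0 1 := by
        rw [inter_eq_right]
        intro u hu
        exact le_trans hu.2 (le_of_lt ht1)
      rw [h1, hIccfin, hμapp _ measurableSet_Iic]
      have : ∀ x, ENNReal.ofReal (p₀ x) * ν x (Iic t) = ENNReal.ofReal (p₀ x) := by
        intro x
        rw [hνapp x _ measurableSet_Iic]
        have : (f x) ⁻¹' Iic t ∩ Icc 0 1 = Icc (0:ℝ) 1 := by
          rw [inter_eq_right]
          intro u hu
          simp only [mem_preimage, mem_Iic, hf]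
          have := hu.1; have := hu.2
          nlinarith [ha x, hb x, hab x]
        rw [this, hIccfin, mul_one]
      rw [tsum_congr this, ← ENNReal.ofReal_tsum_of_nonneg hp₀ hps, hp₀sum, ENNReal.ofReal_one]
  -- no atoms: p₀ x ≠ 0 → b x > 0
  have hbpos : ∀ x, p₀ x ≠ 0 → 0 < b x := by
    intro x hx
    rcases lt_or_eq_of_le (hb x) with h1 | h1
    · exact h1
    exfalso
    have hsing : μ {a x} = 0 := by
      rw [hμeq, Measure.restrict_apply (measurableSet_singleton _)]
      exact measure_mono_null inter_subset_left (measure_singleton _)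
    have hνone : ν x {a x} = 1 := by
      rw [hνapp x _ (measurableSet_singleton _)]
      have : (f x) ⁻¹' {a x} ∩ Icc 0 1 = Icc (0:ℝ) 1 := by
        rw [inter_eq_right]
        intro u _
        simp only [mem_preimage, mem_singleton_iff, hf, ← h1, mul_zero, add_zero]
      rw [this, hIccfin]
    have hle : ENNReal.ofReal (p₀ x) * ν x {a x} ≤ μ {a x} := by
      rw [hμapp _ (measurableSet_singleton _)]
      exact ENNReal.le_tsum x
    rw [hνone, mul_one, hsing] at hle
    have : p₀ x ≤ 0 := by
      by_contra hcon
      push_neg at hcon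
      rw [nonpos_iff_eq_zero, ENNReal.ofReal_eq_zero] at hle
      linarith
    exact hx (le_antisymm this (hp₀ x))
  -- integrability of h' w.r.t. μ
  haveI : IsFiniteMeasure (volume.restrict (Icc (0:ℝ) 1)) :=
    ⟨by rw [Measure.restrict_apply_univ, hIccfin]; norm_num⟩
  have hInt : Integrable h' μ := by
    rw [hμeq]
    exact (integrable_const C).mono' hh'meas.aestronglyMeasurable
      (Filter.Eventually.of_forall fun t => by rw [Real.norm_eq_abs]; exact hh'b t)
  have hsum_int : ∫ t, h' t ∂μ = ∑' x, p₀ x * ∫ u in Icc (0:ℝ) 1, h' (f x u) := by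
    rw [hμdef] at hInt ⊢
    rw [integral_sum_measure hInt]
    apply tsum_congr
    intro x
    rw [integral_smul_measure, ENNReal.toReal_ofReal (hp₀ x), hν,
      integral_map (hfmeas x).aemeasurable hh'meas.aestronglyMeasurable, smul_eq_mul]
  have hIcc_interval : ∀ g : ℝ → ℝ, ∫ u in Icc (0:ℝ) 1, g u = ∫ u in (0:ℝ)..1, g u := by
    intro g
    rw [intervalIntegral.integral_of_le zero_le_one, integral_Icc_eq_integral_Ioc]
  have hμint : ∫ t, h' t ∂μ = ∫ u in (0:ℝ)..1, h u := by
    rw [hμeq, hIcc_interval h', intervalIntegral.integral_of_le zero_le_one,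
      intervalIntegral.integral_of_le zero_le_one]
    apply setIntegral_congr_ae measurableSet_Ioc
    have h1 : ∀ᵐ t : ℝ, t ∉ ({1} : Set ℝ) :=
      measure_eq_zero_iff_ae_notMem.mp Real.volume_singleton
    filter_upwards [h1] with t ht htmem
    exact hh'eq t ⟨htmem.1, lt_of_le_of_ne htmem.2 fun hteq => ht (by simp [hteq])⟩
  have hmid_mem : ∀ x, a x + b x / 2 ∈ Icc (0:ℝ) 1 := by
    intro x
    constructor
    · nlinarith [ha x, hb x]
    · nlinarith [ha x, hb x, hab x]
  have habs : ∀ x, |∫ u in (0:ℝ)..1, h' (f x u)| ≤ C := by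
    intro x
    have hCnn : 0 ≤ C := le_trans (abs_nonneg _) (hCb _ hhalf)
    have := intervalIntegral.norm_integral_le_of_norm_le_const
      (C := C) (f := fun u => h' (f x u)) (a := (0:ℝ)) (b := 1)
      (fun u _ => by rw [Real.norm_eq_abs]; exact hh'b _)
    rw [Real.norm_eq_abs] at this
    simpa using this
  have hsummL : Summable fun x => p₀ x * h (a x + b x / 2) := by
    rw [← summable_abs_iff]
    apply Summable.of_nonneg_of_le (fun x => abs_nonneg _) (fun x => ?_) (hps.mul_right C)
    rw [abs_mul, abs_of_nonneg (hp₀ x)]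
    exact mul_le_mul_of_nonneg_left (hCb _ (hmid_mem x)) (hp₀ x)
  have hsummR : Summable fun x => p₀ x * ∫ u in (0:ℝ)..1, h' (f x u) := by
    rw [← summable_abs_iff]
    apply Summable.of_nonneg_of_le (fun x => abs_nonneg _) (fun x => ?_) (hps.mul_right C)
    rw [abs_mul, abs_of_nonneg (hp₀ x)]
    exact mul_le_mul_of_nonneg_left (habs x) (hp₀ x)
  have hterm : ∀ x, p₀ x * h (a x + b x / 2) ≤ p₀ x * ∫ u in (0:ℝ)..1, h' (f x u) := by
    intro x
    rcases eq_or_ne (p₀ x) 0 with h0 | h0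
    · simp [h0]
    · have hbx := hbpos x h0
      exact mul_le_mul_of_nonneg_left
        (jensen_aux (ha x) hbx (hab x) hconv hh'eq hh'meas C hh'b) (hp₀ x)
  calc ∑' x, p₀ x * h (a x + b x / 2)
      ≤ ∑' x, p₀ x * ∫ u in (0:ℝ)..1, h' (f x u) := Summable.tsum_le_tsum hterm hsummL hsummR
    _ = ∫ t, h' t ∂μ := by
        rw [hsum_int]
        exact tsum_congr fun x => by rw [hIcc_interval (fun u => h' (f x u))]
    _ = ∫ u in (0:ℝ)..1, h u := hμint
end

section
/- For every convex function h : [0,1] → ℝ, Σ_{x∈𝒳} p₀(x)·h(Q^T(x)) ≤ ∫₀¹ h(u) du; that is, the mid-p-value based on T is sub-uniform under the null distribution. -/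
open MeasureTheory

/-- Strict upper tail probability of `T` under `p₀`. -/
noncomputable def midF {𝒳 : Type*} (p₀ T : 𝒳 → ℝ) (t : ℝ) : ℝ :=
  ∑' y, if t < T y then p₀ y else 0

/-- Probability of a tie with value `t` under `p₀`. -/
noncomputable def midG {𝒳 : Type*} (p₀ T : 𝒳 → ℝ) (t : ℝ) : ℝ :=
  ∑' y, if T y = t then p₀ y else 0

lemma conv_bound {h : ℝ → ℝ} (hconv : ConvexOn ℝ (Set.Icc (0:ℝ) 1) h) :
    ∃ C : ℝ, ∀ u ∈ Set.Icc (0:ℝ) 1, |h u| ≤ C := by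
  have h0 : (0:ℝ) ∈ Set.Icc (0:ℝ) 1 := by norm_num
  have h1 : (1:ℝ) ∈ Set.Icc (0:ℝ) 1 := by norm_num
  set M := max (h 0) (h 1) with hM
  have hub : ∀ u ∈ Set.Icc (0:ℝ) 1, h u ≤ M := by
    intro u hu
    obtain ⟨hu0, hu1⟩ := hu
    have key := hconv.2 h0 h1 (by linarith : (0:ℝ) ≤ 1 - u) hu0 (by ring)
    simp only [smul_eq_mul, mul_zero, mul_one, zero_add] at key
    have e1 : (1-u) * h 0 ≤ (1-u) * M :=
      mul_le_mul_of_nonneg_left (le_max_left _ _) (by linarith)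
    have e2 : u * h 1 ≤ u * M :=
      mul_le_mul_of_nonneg_left (le_max_right _ _) hu0
    nlinarith
  refine ⟨max M (M - 2 * h (1/2)), fun u hu => abs_le.2
    ⟨?_, le_trans (hub u hu) (le_max_left _ _)⟩⟩
  have humem : 1 - u ∈ Set.Icc (0:ℝ) 1 := ⟨by linarith [hu.2], by linarith [hu.1]⟩
  have key := hconv.2 hu humem (by norm_num : (0:ℝ) ≤ 1/2)
    (by norm_num : (0:ℝ) ≤ 1/2) (by norm_num)
  simp only [smul_eq_mul] at key
  have heq : (1/2 : ℝ) * u + (1/2) * (1 - u) = 1/2 := by ring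
  rw [heq] at key
  have hub' := hub (1-u) humem
  have hmax := le_max_right M (M - 2 * h (1/2))
  linarith

lemma conv_integrable {h : ℝ → ℝ} (hconv : ConvexOn ℝ (Set.Icc (0:ℝ) 1) h) :
    IntegrableOn h (Set.Ioc (0:ℝ) 1) volume := by
  obtain ⟨C, hC⟩ := conv_bound hconv
  have hcont : ContinuousOn h (Set.Ioo (0:ℝ) 1) := by
    have := hconv.continuousOn_interior
    rwa [interior_Icc] at this
  haveI : IsFiniteMeasure (volume.restrict (Set.Ioo (0:ℝ) 1)) :=
    ⟨by rw [Measure.restrict_apply_univ]; simp [Real.volume_Ioo]⟩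
  have hio : IntegrableOn h (Set.Ioo (0:ℝ) 1) volume := by
    refine ⟨hcont.aestronglyMeasurable measurableSet_Ioo, ?_⟩
    refine HasFiniteIntegral.of_bounded (C := C) ?_
    refine (ae_restrict_iff' measurableSet_Ioo).2 (Filter.Eventually.of_forall fun u hu => ?_)
    rw [Real.norm_eq_abs]
    exact hC u (Set.mem_Icc_of_Ioo hu)
  exact hio.congr_set_ae Ioo_ae_eq_Ioc.symm

lemma midHH {h : ℝ → ℝ} (hconv : ConvexOn ℝ (Set.Icc (0:ℝ) 1) h)
    (hint : IntegrableOn h (Set.Ioc (0:ℝ) 1) volume)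
    {a m : ℝ} (ha : 0 ≤ a) (hm : 0 ≤ m) (ham : a + m ≤ 1) :
    m * h (a + (1/2) * m) ≤ ∫ u in a..(a+m), h u := by
  have hle : a ≤ a + m := by linarith
  have hsub : Set.Ioc a (a+m) ⊆ Set.Ioc 0 1 := Set.Ioc_subset_Ioc ha ham
  have h1 : IntervalIntegrable h volume a (a+m) := by
    rw [intervalIntegrable_iff, Set.uIoc_of_le hle]
    exact hint.mono_set hsub
  set c := a + (a + m) with hc
  have h2 : IntervalIntegrable (fun u => h (c - u)) volume a (a+m) := by
    have := (h1.comp_sub_left c).symm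
    have e1 : c - (a+m) = a := by rw [hc]; ring
    have e2 : c - a = a + m := by rw [hc]; ring
    rwa [e1, e2] at this
  have hpt : ∀ u ∈ Set.Icc a (a+m), 2 * h (a + (1/2)*m) ≤ h u + h (c - u) := by
    intro u hu
    have hu1 : u ∈ Set.Icc (0:ℝ) 1 := ⟨by linarith [hu.1], by linarith [hu.2]⟩
    have hu2 : c - u ∈ Set.Icc (0:ℝ) 1 := by
      constructor
      · have : a ≤ c - u := by rw [hc]; linarith [hu.2]
        linarith
      · have : c - u ≤ a + m := by rw [hc]; linarith [hu.1]
        linarith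
    have key := hconv.2 hu1 hu2 (by norm_num : (0:ℝ) ≤ 1/2)
      (by norm_num : (0:ℝ) ≤ 1/2) (by norm_num)
    simp only [smul_eq_mul] at key
    have heq : (1/2:ℝ) * u + (1/2) * (c - u) = a + (1/2)*m := by rw [hc]; ring
    rw [heq] at key
    linarith
  have hmono := intervalIntegral.integral_mono_on hle
    (intervalIntegrable_const (c := 2 * h (a + (1/2)*m))) (h1.add h2) hpt
  rw [intervalIntegral.integral_const, intervalIntegral.integral_add h1 h2] at hmono
  have hsym : (∫ u in a..(a+m), h (c - u)) = ∫ u in a..(a+m), h u := by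
    rw [intervalIntegral.integral_comp_sub_left h c]
    congr 1 <;> rw [hc] <;> ring
  rw [hsym] at hmono
  simp only [smul_eq_mul] at hmono
  have hmm : a + m - a = m := by ring
  rw [hmm] at hmono
  linarith

theorem midp_aux {𝒳 : Type*} [Countable 𝒳]
    (p₀ : 𝒳 → ℝ) (hp₀ : ∀ x, 0 ≤ p₀ x) (hp₀sum : ∑' x, p₀ x = 1)
    (T : 𝒳 → ℝ) (h : ℝ → ℝ) (hconv : ConvexOn ℝ (Set.Icc (0:ℝ) 1) h) :
    ∑' x, p₀ x * h (midF p₀ T (T x) + (1/2) * midG p₀ T (T x)) ≤ ∫ u in (0:ℝ)..1, h u := by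
  classical
  have hps : Summable p₀ := by
    by_contra hc
    rw [tsum_eq_zero_of_not_summable hc] at hp₀sum
    exact one_ne_zero hp₀sum.symm
  have hsumF : ∀ t : ℝ, Summable (fun y => if t < T y then p₀ y else 0) := fun t =>
    Summable.of_nonneg_of_le (fun y => by split_ifs with hy; exacts [hp₀ y, le_rfl])
      (fun y => by split_ifs with hy; exacts [le_rfl, hp₀ y]) hps
  have hsumG : ∀ t : ℝ, Summable (fun y => if T y = t then p₀ y else 0) := fun t =>
    Summable.of_nonneg_of_le (fun y => by split_ifs with hy; exacts [hp₀ y, le_rfl])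
      (fun y => by split_ifs with hy; exacts [le_rfl, hp₀ y]) hps
  have hF0 : ∀ t, 0 ≤ midF p₀ T t := fun t =>
    tsum_nonneg (fun y => by split_ifs with hy; exacts [hp₀ y, le_rfl])
  have hG0 : ∀ t, 0 ≤ midG p₀ T t := fun t =>
    tsum_nonneg (fun y => by split_ifs with hy; exacts [hp₀ y, le_rfl])
  have hFG1 : ∀ t, midF p₀ T t + midG p₀ T t ≤ 1 := by
    intro t
    rw [midF, midG, ← Summable.tsum_add (hsumF t) (hsumG t), ← hp₀sum]
    refine Summable.tsum_le_tsum (fun y => ?_) ((hsumF t).add (hsumG t)) hps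
    by_cases h2 : T y = t
    · have h1 : ¬ t < T y := by rw [h2]; exact lt_irrefl t
      simp [h1, h2]
    · by_cases h1 : t < T y <;> simp [h1, h2, hp₀ y]
  have hmono : ∀ s t : ℝ, s < t → midF p₀ T t + midG p₀ T t ≤ midF p₀ T s := by
    intro s t hst
    rw [midF, midG, midF, ← Summable.tsum_add (hsumF t) (hsumG t)]
    refine Summable.tsum_le_tsum (fun y => ?_) ((hsumF t).add (hsumG t)) (hsumF s)
    by_cases h2 : T y = t
    · have h1 : ¬ t < T y := by rw [h2]; exact lt_irrefl t
      have hs : s < T y := by rw [h2]; exact hst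
      simp [h1, h2, hs, hst]
    · by_cases h1 : t < T y
      · have hs : s < T y := hst.trans h1
        simp [h1, h2, hs]
      · by_cases hs : s < T y <;> simp [h1, h2, hs, hp₀ y]
  have hmid : ∀ t : ℝ, midF p₀ T t + (1/2) * midG p₀ T t ∈ Set.Icc (0:ℝ) 1 := fun t =>
    ⟨by linarith [hF0 t, hG0 t], by linarith [hFG1 t, hG0 t]⟩
  haveI : Countable ↥(Set.range T) := (Set.countable_range T).to_subtype
  set g : 𝒳 → ↥(Set.range T) := fun x => ⟨T x, Set.mem_range_self x⟩ with hg
  have hfib : ∀ (b : Set.range T) (x : ↥(g ⁻¹' {b})), T (x : 𝒳) = (b : ℝ) := by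
    intro b x
    have hx : g (x : 𝒳) = b := x.2
    exact congrArg Subtype.val hx
  have hGfib : ∀ b : Set.range T, (∑' x : ↥(g ⁻¹' {b}), p₀ (x : 𝒳)) = midG p₀ T b := by
    intro b
    rw [midG, tsum_subtype]
    refine tsum_congr fun y => ?_
    by_cases hy : g y = b
    · have hTy : T y = (b:ℝ) := congrArg Subtype.val hy
      simp [Set.indicator_apply, hy, hTy]
    · have hTy : ¬ T y = (b:ℝ) := fun e => hy (Subtype.ext e)
      simp [Set.indicator_apply, hy, hTy]
  obtain ⟨C, hC⟩ := conv_bound hconv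
  have hfsum : Summable (fun x => p₀ x * h (midF p₀ T (T x) + (1/2) * midG p₀ T (T x))) := by
    refine Summable.of_norm ?_
    refine Summable.of_nonneg_of_le (fun x => norm_nonneg _) (fun x => ?_) (hps.mul_left C)
    rw [Real.norm_eq_abs, abs_mul, abs_of_nonneg (hp₀ x)]
    calc p₀ x * |h (midF p₀ T (T x) + (1/2) * midG p₀ T (T x))|
        ≤ p₀ x * C := mul_le_mul_of_nonneg_left (hC _ (hmid (T x))) (hp₀ x)
      _ = C * p₀ x := mul_comm _ _
  have hinner : ∀ b : Set.range T,
      (∑' x : ↥(g ⁻¹' {b}), p₀ (x : 𝒳) * h (midF p₀ T (T (x : 𝒳)) + (1/2) * midG p₀ T (T (x : 𝒳))))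
        = midG p₀ T b * h (midF p₀ T b + (1/2) * midG p₀ T b) := by
    intro b
    have hcong : ∀ x : ↥(g ⁻¹' {b}),
        p₀ (x : 𝒳) * h (midF p₀ T (T (x : 𝒳)) + (1/2) * midG p₀ T (T (x : 𝒳)))
          = p₀ (x : 𝒳) * h (midF p₀ T b + (1/2) * midG p₀ T b) := fun x => by rw [hfib b x]
    rw [tsum_congr hcong, tsum_mul_right, hGfib b]
  have hLHS : HasSum (fun b : Set.range T => midG p₀ T b * h (midF p₀ T b + (1/2) * midG p₀ T b))
      (∑' x, p₀ x * h (midF p₀ T (T x) + (1/2) * midG p₀ T (T x))) := by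
    have hfw := hfsum.hasSum.tsum_fiberwise g
    rwa [show (fun b : Set.range T => ∑' x : ↥(g ⁻¹' {b}),
        p₀ (x : 𝒳) * h (midF p₀ T (T (x : 𝒳)) + (1/2) * midG p₀ T (T (x : 𝒳))))
      = fun b : Set.range T => midG p₀ T b * h (midF p₀ T b + (1/2) * midG p₀ T b)
      from funext hinner] at hfw
  have hint := conv_integrable hconv
  set S : Set.range T → Set ℝ :=
    fun b => Set.Ioc (midF p₀ T b) (midF p₀ T b + midG p₀ T b) with hS
  have hSsub : ∀ b, S b ⊆ Set.Ioc 0 1 := fun b => Set.Ioc_subset_Ioc (hF0 b) (hFG1 b)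
  have hdisj : Pairwise (Function.onFun Disjoint S) := by
    intro b b' hne
    have hne' : (b:ℝ) ≠ (b':ℝ) := fun e => hne (Subtype.ext e)
    rcases hne'.lt_or_gt with hlt | hlt
    · exact Set.disjoint_left.2 fun u hub hub' =>
        absurd ((hub'.2).trans (hmono _ _ hlt)) (not_le.2 hub.1)
    · exact Set.disjoint_left.2 fun u hub hub' =>
        absurd ((hub.2).trans (hmono _ _ hlt)) (not_le.2 hub'.1)
  have hmeasS : ∀ b, MeasurableSet (S b) := fun b => measurableSet_Ioc
  have hintU : IntegrableOn h (⋃ b, S b) volume := hint.mono_set (Set.iUnion_subset hSsub)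
  have hRHS : HasSum (fun b => ∫ u in S b, h u) (∫ u in ⋃ b, S b, h u) :=
    hasSum_integral_iUnion hmeasS hdisj hintU
  have hkey : ∀ b : Set.range T,
      midG p₀ T b * h (midF p₀ T b + (1/2) * midG p₀ T b) ≤ ∫ u in S b, h u := by
    intro b
    have hHH := midHH hconv hint (hF0 b) (hG0 b) (hFG1 b)
    rwa [intervalIntegral.integral_of_le
      (by linarith [hG0 (b:ℝ)] : midF p₀ T b ≤ midF p₀ T b + midG p₀ T b)] at hHH
  have hGsum1 : HasSum (fun b : Set.range T => midG p₀ T b) 1 := by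
    have hfw := hps.hasSum.tsum_fiberwise g
    rw [hp₀sum] at hfw
    rwa [show (fun b : Set.range T => ∑' x : ↥(g ⁻¹' {b}), p₀ (x : 𝒳))
      = fun b : Set.range T => midG p₀ T b from funext hGfib] at hfw
  have hvol : volume (⋃ b, S b) = 1 := by
    rw [measure_iUnion hdisj hmeasS]
    have hv : ∀ b : Set.range T, volume (S b) = ENNReal.ofReal (midG p₀ T b) := by
      intro b
      rw [hS]
      simp only []
      rw [Real.volume_Ioc]
      congr 1
      ring
    rw [tsum_congr hv, ← ENNReal.ofReal_tsum_of_nonneg (fun b : ↥(Set.range T) => hG0 (b:ℝ)) hGsum1.summable,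
      hGsum1.tsum_eq]
    simp
  have hae : (⋃ b, S b) =ᵐ[volume] Set.Ioc (0:ℝ) 1 := by
    rw [MeasureTheory.ae_eq_set]
    constructor
    · rw [Set.diff_eq_empty.2 (Set.iUnion_subset hSsub)]
      exact measure_empty
    · have hdm := measure_diff (Set.iUnion_subset hSsub)
        (MeasurableSet.iUnion hmeasS).nullMeasurableSet (by rw [hvol]; exact ENNReal.one_ne_top)
      rw [hdm, hvol]
      simp [Real.volume_Ioc]
  have hfinal : (∫ u in ⋃ b, S b, h u) = ∫ u in Set.Ioc (0:ℝ) 1, h u :=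
    setIntegral_congr_set hae
  rw [intervalIntegral.integral_of_le (zero_le_one), ← hfinal, ← hRHS.tsum_eq, ← hLHS.tsum_eq]
  exact Summable.tsum_le_tsum hkey hLHS.summable hRHS.summable

/-- The mid-p-value based on a test statistic `T`,
`Q^T(x) = Pr₀{T(X) > T(x)} + (1/2)·Pr₀{T(X) = T(x)}`, is sub-uniform under the null:
`E₀[h(Q^T(X))] = Σ_x p₀(x)·h(Q^T(x)) ≤ ∫₀¹ h(u) du` for every convex `h : [0,1] → ℝ`. -/
theorem stmt_1 {𝒳 : Type*} [Countable 𝒳]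
    (p₀ : 𝒳 → ℝ) (hp₀ : ∀ x, 0 ≤ p₀ x) (hp₀sum : ∑' x, p₀ x = 1)
    (T : 𝒳 → ℝ)
    (Q : 𝒳 → ℝ)
    (hQ : ∀ x, Q x = (∑' y, if T x < T y then p₀ y else 0)
      + (1/2) * ∑' y, if T y = T x then p₀ y else 0)
    (h : ℝ → ℝ) (hconv : ConvexOn ℝ (Set.Icc (0:ℝ) 1) h) :
    ∑' x, p₀ x * h (Q x) ≤ ∫ u in (0:ℝ)..1, h u := by
  have hQ' : ∀ x, Q x = midF p₀ T (T x) + (1/2) * midG p₀ T (T x) := hQ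
  calc ∑' x, p₀ x * h (Q x)
      = ∑' x, p₀ x * h (midF p₀ T (T x) + (1/2) * midG p₀ T (T x)) :=
        tsum_congr fun x => by rw [hQ' x]
    _ ≤ ∫ u in (0:ℝ)..1, h u := midp_aux p₀ hp₀ hp₀sum T h hconv
end

section
/- Let α ∈ [0,1], let φ be a size-α test based on T and let ψ be a minimally discrete size-α test based on R, where R is injective and agrees with T, and assume p₀(x) > 0 for every x ∈ 𝒳. Then the rejection region of φ is contained in that of ψ: for every x ∈ 𝒳, φ(x) = 1 implies ψ(x) = 1. -/
/-- If `φ` is a size-α test based on `T` and `ψ` is a minimally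
discrete size-α test based on `R`, where `R` is injective and agrees with `T`,
and `p₀(x) > 0` for all `x`, then the rejection region of `φ` is contained in
that of `ψ`: `φ(x) = 1` implies `ψ(x) = 1`. -/
theorem stmt_3 {𝒳 : Type*} [Countable 𝒳]
    (p₀ : 𝒳 → ℝ) (hp₀pos : ∀ x, 0 < p₀ x) (hp₀sum : ∑' x, p₀ x = 1)
    (T : 𝒳 → ℝ) (R : 𝒳 → ℕ) (hRinj : Function.Injective R)
    (hagree : ∀ x y, T x > T y → R x < R y)
    (α : ℝ) (hα : α ∈ Set.Icc (0:ℝ) 1)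
    (φ : 𝒳 → ℝ) (hφ01 : ∀ x, φ x ∈ Set.Icc (0:ℝ) 1)
    (k : ℝ) (γ : ℝ) (hγ : γ ∈ Set.Icc (0:ℝ) 1)
    (hφ1 : ∀ x, T x > k → φ x = 1) (hφ2 : ∀ x, T x = k → φ x = γ)
    (hφ3 : ∀ x, T x < k → φ x = 0) (hφα : ∑' x, φ x * p₀ x = α)
    (ψ : 𝒳 → ℝ) (hψ01 : ∀ x, ψ x ∈ Set.Icc (0:ℝ) 1)
    (kstar : ℕ) (γstar : ℝ) (hγstar : γstar ∈ Set.Icc (0:ℝ) 1)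
    (hψ1 : ∀ x, R x < kstar → ψ x = 1) (hψ2 : ∀ x, R x = kstar → ψ x = γstar)
    (hψ3 : ∀ x, R x > kstar → ψ x = 0) (hψα : ∑' x, ψ x * p₀ x = α) :
    ∀ x, φ x = 1 → ψ x = 1 := by
  intro x hx
  by_contra hψx
  have hψle : ∀ y, ψ y ≤ φ y := by
    intro y
    by_contra hlt
    push_neg at hlt
    have hψy_pos : 0 < ψ y := lt_of_le_of_lt (hφ01 y).1 hlt
    have hRy : R y ≤ kstar := by
      by_contra h; push_neg at h
      rw [hψ3 y h] at hψy_pos; linarith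
    have hRx : kstar ≤ R x := by
      by_contra h; push_neg at h
      exact hψx (hψ1 x h)
    have hT : T x ≤ T y := by
      by_contra h; push_neg at h
      have := hagree x y h
      omega
    have hTx : k ≤ T x := by
      by_contra h; push_neg at h
      rw [hφ3 x h] at hx; linarith
    have hφy : φ y = 1 := by
      rcases lt_or_eq_of_le hTx with h | h
      · exact hφ1 y (lt_of_lt_of_le h hT)
      · rcases lt_or_eq_of_le hT with h2 | h2
        · exact hφ1 y (h ▸ h2)
        · have hγ1 : γ = 1 := by rw [hφ2 x h.symm] at hx; exact hx
          rw [hφ2 y (h2 ▸ h.symm), hγ1]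
    rw [hφy] at hlt
    exact absurd hlt (not_lt.2 (hψ01 y).2)
  have hp₀summ : Summable p₀ := by
    by_contra h
    rw [tsum_eq_zero_of_not_summable h] at hp₀sum; norm_num at hp₀sum
  have hφsumm : Summable (fun y => φ y * p₀ y) := by
    apply hp₀summ.of_nonneg_of_le (fun y => mul_nonneg (hφ01 y).1 (hp₀pos y).le)
    intro y
    calc φ y * p₀ y ≤ 1 * p₀ y :=
          mul_le_mul_of_nonneg_right (hφ01 y).2 (hp₀pos y).le
      _ = p₀ y := one_mul _
  have hψsumm : Summable (fun y => ψ y * p₀ y) := by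
    apply hφsumm.of_nonneg_of_le (fun y => mul_nonneg (hψ01 y).1 (hp₀pos y).le)
    exact fun y => mul_le_mul_of_nonneg_right (hψle y) (hp₀pos y).le
  have hstrict : ψ x * p₀ x < φ x * p₀ x := by
    have hψx1 : ψ x < 1 := lt_of_le_of_ne (hψ01 x).2 hψx
    rw [hx]
    nlinarith [hp₀pos x]
  have hlt : ∑' y, ψ y * p₀ y < ∑' y, φ y * p₀ y :=
    Summable.tsum_lt_tsum (fun y => mul_le_mul_of_nonneg_right (hψle y) (hp₀pos y).le)
      hstrict hψsumm hφsumm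
  rw [hψα, hφα] at hlt; exact lt_irrefl α hlt
end

section
/- Let α ∈ [0,1], let φ be a size-α test based on T and let ψ be a minimally discrete size-α test based on R, where R is injective and agrees with T, and assume p₀(x) > 0 for every x ∈ 𝒳. Then for every θ ∈ Θ, the non-randomized MD decision rule is at least as powerful as the non-randomized rule based on T: Pr_θ{ψ(X) = 1} ≥ Pr_θ{φ(X) = 1}. -/
/-- If `φ` is a size-α test based on `T` and `ψ` is a minimally
discrete size-α test based on `R` (injective, agreeing with `T`), with
`p₀(x) > 0` for all `x`, then for every `θ ∈ Θ` the non-randomized MD decision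
rule is at least as powerful: `Pr_θ{ψ(X) = 1} ≥ Pr_θ{φ(X) = 1}`. -/
theorem stmt_4 {𝒳 : Type*} [Countable 𝒳] {Θ : Type*}
    (p : Θ → 𝒳 → ℝ) (hp : ∀ θ x, 0 ≤ p θ x) (hpsum : ∀ θ, ∑' x, p θ x = 1)
    (θ₀ : Θ) (p₀ : 𝒳 → ℝ) (hnull : p θ₀ = p₀)
    (hp₀pos : ∀ x, 0 < p₀ x)
    (T : 𝒳 → ℝ) (R : 𝒳 → ℕ) (hRinj : Function.Injective R)
    (hagree : ∀ x y, T x > T y → R x < R y)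
    (α : ℝ) (hα : α ∈ Set.Icc (0:ℝ) 1)
    (φ : 𝒳 → ℝ) (hφ01 : ∀ x, φ x ∈ Set.Icc (0:ℝ) 1)
    (k : ℝ) (γ : ℝ) (hγ : γ ∈ Set.Icc (0:ℝ) 1)
    (hφ1 : ∀ x, T x > k → φ x = 1) (hφ2 : ∀ x, T x = k → φ x = γ)
    (hφ3 : ∀ x, T x < k → φ x = 0) (hφα : ∑' x, φ x * p₀ x = α)
    (ψ : 𝒳 → ℝ) (hψ01 : ∀ x, ψ x ∈ Set.Icc (0:ℝ) 1)
    (kstar : ℕ) (γstar : ℝ) (hγstar : γstar ∈ Set.Icc (0:ℝ) 1)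
    (hψ1 : ∀ x, R x < kstar → ψ x = 1) (hψ2 : ∀ x, R x = kstar → ψ x = γstar)
    (hψ3 : ∀ x, R x > kstar → ψ x = 0) (hψα : ∑' x, ψ x * p₀ x = α) :
    ∀ θ : Θ, (∑' x, if φ x = 1 then p θ x else 0) ≤ ∑' x, if ψ x = 1 then p θ x else 0 := by
  -- summability of p θ for each θ
  have hsumm : ∀ θ, Summable (p θ) := by
    intro θ
    by_contra h
    have := tsum_eq_zero_of_not_summable h
    rw [hpsum θ] at this
    exact one_ne_zero this
  have hsumm₀ : Summable p₀ := hnull ▸ hsumm θ₀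
  -- Key claim: φ x = 1 → ψ x = 1
  have key : ∀ x, φ x = 1 → ψ x = 1 := by
    intro x₀ hφx
    by_contra hψx
    -- R x₀ ≥ kstar
    have hRx : kstar ≤ R x₀ := by
      by_contra h
      exact hψx (hψ1 x₀ (by omega))
    -- T x₀ ≥ k and if T x₀ = k then γ = 1
    have hT : T x₀ > k ∨ (T x₀ = k ∧ γ = 1) := by
      rcases lt_trichotomy (T x₀) k with h | h | h
      · exact absurd (hφ3 x₀ h) (by rw [hφx]; norm_num)
      · exact Or.inr ⟨h, by rw [← hφ2 x₀ h, hφx]⟩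
      · exact Or.inl h
    -- ψ ≤ φ pointwise
    have hle : ∀ y, ψ y ≤ φ y := by
      intro y
      rcases lt_trichotomy (R y) kstar with h | h | h
      · -- R y < kstar ≤ R x₀, use agreement
        have hRy : ¬ R x₀ < R y := by omega
        have hTy : ¬ T x₀ > T y := fun hh => hRy (hagree x₀ y hh)
        push_neg at hTy
        have : φ y = 1 := by
          rcases hT with h' | ⟨h', hγ1⟩
          · exact hφ1 y (lt_of_lt_of_le h' hTy)
          · rcases lt_or_eq_of_le (h' ▸ hTy : k ≤ T y) with hh | hh
            · exact hφ1 y hh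
            · rw [hφ2 y hh.symm, hγ1]
        rw [this]; exact (hψ01 y).2
      · -- R y = kstar, same argument
        have hRy : ¬ R x₀ < R y := by omega
        have hTy : ¬ T x₀ > T y := fun hh => hRy (hagree x₀ y hh)
        push_neg at hTy
        have : φ y = 1 := by
          rcases hT with h' | ⟨h', hγ1⟩
          · exact hφ1 y (lt_of_lt_of_le h' hTy)
          · rcases lt_or_eq_of_le (h' ▸ hTy : k ≤ T y) with hh | hh
            · exact hφ1 y hh
            · rw [hφ2 y hh.symm, hγ1]
        rw [this]; exact (hψ01 y).2
      · rw [hψ3 y h]; exact (hφ01 y).1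
    -- strict at x₀
    have hstrict : ψ x₀ < φ x₀ := by
      rw [hφx]
      exact lt_of_le_of_ne (hψ01 x₀).2 hψx
    -- summability of the products
    have hsφ : Summable (fun x => φ x * p₀ x) := by
      apply Summable.of_nonneg_of_le (fun x => mul_nonneg (hφ01 x).1 (hp₀pos x).le)
        (fun x => ?_) hsumm₀
      calc φ x * p₀ x ≤ 1 * p₀ x :=
        mul_le_mul_of_nonneg_right (hφ01 x).2 (hp₀pos x).le
      _ = p₀ x := one_mul _
    have hsψ : Summable (fun x => ψ x * p₀ x) := by
      apply Summable.of_nonneg_of_le (fun x => mul_nonneg (hψ01 x).1 (hp₀pos x).le)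
        (fun x => ?_) hsumm₀
      calc ψ x * p₀ x ≤ 1 * p₀ x :=
        mul_le_mul_of_nonneg_right (hψ01 x).2 (hp₀pos x).le
      _ = p₀ x := one_mul _
    have hlt : ∑' x, ψ x * p₀ x < ∑' x, φ x * p₀ x := by
      apply Summable.tsum_lt_tsum (i := x₀)
        (fun y => mul_le_mul_of_nonneg_right (hle y) (hp₀pos y).le)
        (by exact mul_lt_mul_of_pos_right hstrict (hp₀pos x₀)) hsψ hsφ
    rw [hφα, hψα] at hlt
    exact lt_irrefl α hlt
  -- conclude
  intro θ
  have hle : ∀ x, (if φ x = 1 then p θ x else 0) ≤ (if ψ x = 1 then p θ x else 0) := by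
    intro x
    by_cases h : φ x = 1
    · simp [h, key x h]
    · simp only [h, if_false]
      split <;> [exact hp θ x; exact le_refl 0]
  have hs₁ : Summable (fun x => if φ x = 1 then p θ x else 0) := by
    apply Summable.of_nonneg_of_le (fun x => ?_) (fun x => ?_) (hsumm θ)
    · split <;> [exact hp θ x; exact le_refl 0]
    · split <;> [exact le_refl _; exact hp θ x]
  have hs₂ : Summable (fun x => if ψ x = 1 then p θ x else 0) := by
    apply Summable.of_nonneg_of_le (fun x => ?_) (fun x => ?_) (hsumm θ)
    · split <;> [exact hp θ x; exact le_refl 0]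
    · split <;> [exact le_refl _; exact hp θ x]
  exact Summable.tsum_le_tsum hle hs₁ hs₂
end

section
/- Let α ∈ [0,1], let φ be a size-α test based on T and let ψ be a minimally discrete size-α test based on R, where R is injective and agrees with T, and assume p₀(x) > 0 for every x ∈ 𝒳. Then Pr₀{φ(X) = 1} ≤ Pr₀{ψ(X) = 1} ≤ α; in particular the non-randomized MD decision rule has level α under the null. -/
/-- If `φ` is a size-α test based on `T` and `ψ` is a minimally
discrete size-α test based on `R` (injective, agreeing with `T`), with
`p₀(x) > 0` for all `x`, then `Pr₀{φ(X) = 1} ≤ Pr₀{ψ(X) = 1} ≤ α`; in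
particular the non-randomized MD decision rule has level α under the null. -/
theorem stmt_5 {𝒳 : Type*} [Countable 𝒳]
    (p₀ : 𝒳 → ℝ) (hp₀pos : ∀ x, 0 < p₀ x) (hp₀sum : ∑' x, p₀ x = 1)
    (T : 𝒳 → ℝ) (R : 𝒳 → ℕ) (hRinj : Function.Injective R)
    (hagree : ∀ x y, T x > T y → R x < R y)
    (α : ℝ) (hα : α ∈ Set.Icc (0:ℝ) 1)
    (φ : 𝒳 → ℝ) (hφ01 : ∀ x, φ x ∈ Set.Icc (0:ℝ) 1)
    (k : ℝ) (γ : ℝ) (hγ : γ ∈ Set.Icc (0:ℝ) 1)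
    (hφ1 : ∀ x, T x > k → φ x = 1) (hφ2 : ∀ x, T x = k → φ x = γ)
    (hφ3 : ∀ x, T x < k → φ x = 0) (hφα : ∑' x, φ x * p₀ x = α)
    (ψ : 𝒳 → ℝ) (hψ01 : ∀ x, ψ x ∈ Set.Icc (0:ℝ) 1)
    (kstar : ℕ) (γstar : ℝ) (hγstar : γstar ∈ Set.Icc (0:ℝ) 1)
    (hψ1 : ∀ x, R x < kstar → ψ x = 1) (hψ2 : ∀ x, R x = kstar → ψ x = γstar)
    (hψ3 : ∀ x, R x > kstar → ψ x = 0) (hψα : ∑' x, ψ x * p₀ x = α) :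
    (∑' x, if φ x = 1 then p₀ x else 0) ≤ (∑' x, if ψ x = 1 then p₀ x else 0)
      ∧ (∑' x, if ψ x = 1 then p₀ x else 0) ≤ α := by
  have hpsum : Summable p₀ := by
    by_contra h
    rw [tsum_eq_zero_of_not_summable h] at hp₀sum
    norm_num at hp₀sum
  have hφsum : Summable (fun x => φ x * p₀ x) :=
    hpsum.of_nonneg_of_le (fun x => mul_nonneg (hφ01 x).1 (hp₀pos x).le)
      (fun x => mul_le_of_le_one_left (hp₀pos x).le (hφ01 x).2)
  have hψsum : Summable (fun x => ψ x * p₀ x) :=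
    hpsum.of_nonneg_of_le (fun x => mul_nonneg (hψ01 x).1 (hp₀pos x).le)
      (fun x => mul_le_of_le_one_left (hp₀pos x).le (hψ01 x).2)
  have hIφsum : Summable (fun x => if φ x = 1 then p₀ x else 0) :=
    hpsum.of_nonneg_of_le
      (fun x => by split <;> [exact (hp₀pos x).le; exact le_refl _])
      (fun x => by split <;> [exact le_refl _; exact (hp₀pos x).le])
  have hIψsum : Summable (fun x => if ψ x = 1 then p₀ x else 0) :=
    hpsum.of_nonneg_of_le
      (fun x => by split <;> [exact (hp₀pos x).le; exact le_refl _])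
      (fun x => by split <;> [exact le_refl _; exact (hp₀pos x).le])
  have key : ∀ x, φ x = 1 → ψ x = 1 := by
    intro x hx
    by_contra hne
    have hψx : ψ x < 1 := lt_of_le_of_ne (hψ01 x).2 hne
    have hRx : kstar ≤ R x := by
      by_contra h
      push_neg at h
      exact hne (hψ1 x h)
    have hTx : k ≤ T x := by
      by_contra h
      push_neg at h
      have h0 := hφ3 x h
      rw [hx] at h0
      norm_num at h0
    have hle : ∀ y, ψ y ≤ φ y := by
      intro y
      rcases lt_trichotomy (R y) (R x) with h | h | h
      · have hTy : T x ≤ T y := by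
          by_contra hT
          push_neg at hT
          exact absurd (hagree x y hT) (by omega)
        rcases lt_or_eq_of_le (le_trans hTx hTy) with hk | hk
        · rw [hφ1 y hk]; exact (hψ01 y).2
        · have hTxk : T x = k := le_antisymm (by linarith) hTx
          have hγ1 : γ = 1 := by rw [← hφ2 x hTxk, hx]
          rw [hφ2 y hk.symm, hγ1]; exact (hψ01 y).2
      · rw [hRinj h, hx]; exact (hψ01 x).2
      · rw [hψ3 y (by omega)]; exact (hφ01 y).1
    have hdsum : Summable (fun y => (φ y - ψ y) * p₀ y) := by
      simpa [sub_mul] using hφsum.sub hψsum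
    have hdz : ∑' y, (φ y - ψ y) * p₀ y = 0 := by
      have : ∑' y, (φ y - ψ y) * p₀ y
          = (∑' y, φ y * p₀ y) - ∑' y, ψ y * p₀ y := by
        simp_rw [sub_mul]
        exact Summable.tsum_sub hφsum hψsum
      rw [this, hφα, hψα, sub_self]
    have hterm : 0 < (φ x - ψ x) * p₀ x :=
      mul_pos (by rw [hx]; linarith) (hp₀pos x)
    have hge := Summable.le_tsum hdsum x
      (fun y _ => mul_nonneg (by linarith [hle y]) (hp₀pos y).le)
    rw [hdz] at hge
    linarith
  constructor
  · refine Summable.tsum_le_tsum (fun x => ?_) hIφsum hIψsum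
    by_cases h : φ x = 1
    · rw [if_pos h, if_pos (key x h)]
    · rw [if_neg h]
      split <;> [exact (hp₀pos x).le; exact le_refl _]
  · rw [← hψα]
    refine Summable.tsum_le_tsum (fun x => ?_) hIψsum hψsum
    by_cases h : ψ x = 1
    · rw [if_pos h, h, one_mul]
    · rw [if_neg h]
      exact mul_nonneg (hψ01 x).1 (hp₀pos x).le
end

section
/- If R is injective and agrees with T, then for every θ ∈ Θ and every t ∈ [0,1], Pr_θ{P^{MD}(X) ≤ t} ≥ Pr_θ{P^T(X) ≤ t}; that is, the MD natural p-value is stochastically less than or equal to the natural p-value based on T under every distribution in the family. -/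
lemma summable_of_tsum_one {α : Type*} (f : α → ℝ) (h : ∑' x, f x = 1) : Summable f := by
  by_contra hs
  rw [tsum_eq_zero_of_not_summable hs] at h
  norm_num at h

/-- If `R` is injective and agrees with `T`, then for every `θ ∈ Θ`
and every `t ∈ [0,1]`, `Pr_θ{P^{MD}(X) ≤ t} ≥ Pr_θ{P^T(X) ≤ t}`: the MD natural
p-value `P^{MD}(x) = Pr₀{R(X) ≤ R(x)}` is stochastically less than or equal to
the natural p-value `P^T(x) = Pr₀{T(X) ≥ T(x)}` under every `p_θ`. -/
theorem stmt_7 {𝒳 : Type*} [Countable 𝒳] {Θ : Type*}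
    (p : Θ → 𝒳 → ℝ) (hp : ∀ θ x, 0 ≤ p θ x) (hpsum : ∀ θ, ∑' x, p θ x = 1)
    (θ₀ : Θ) (p₀ : 𝒳 → ℝ) (hnull : p θ₀ = p₀)
    (T : 𝒳 → ℝ) (R : 𝒳 → ℕ) (hRinj : Function.Injective R)
    (hagree : ∀ x y, T x > T y → R x < R y)
    (PT PMD : 𝒳 → ℝ)
    (hPT : ∀ x, PT x = ∑' y, if T y ≥ T x then p₀ y else 0)
    (hPMD : ∀ x, PMD x = ∑' y, if R y ≤ R x then p₀ y else 0) :
    ∀ θ : Θ, ∀ t ∈ Set.Icc (0:ℝ) 1,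
      (∑' x, if PMD x ≤ t then p θ x else 0) ≥ ∑' x, if PT x ≤ t then p θ x else 0 := by
  intro θ t ht
  have hp0 : ∀ x, 0 ≤ p₀ x := by rw [← hnull]; exact hp θ₀
  have hp0sum : Summable p₀ := summable_of_tsum_one p₀ (hnull ▸ hpsum θ₀)
  -- pointwise: PMD x ≤ PT x
  have key : ∀ x, PMD x ≤ PT x := by
    intro x
    rw [hPMD, hPT]
    apply Summable.tsum_le_tsum
    · intro y
      by_cases h : R y ≤ R x
      · have hT : T y ≥ T x := by
          by_contra hlt
          exact absurd (hagree x y (lt_of_not_ge hlt)) (not_lt.mpr h)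
        simp [h, hT]
      · by_cases h2 : T y ≥ T x <;> simp [h, h2, hp0 y]
    · exact hp0sum.of_nonneg_of_le (fun y => by split; exacts [hp0 y, le_rfl]) (fun y => by split <;> simp [hp0 y])
    · exact hp0sum.of_nonneg_of_le (fun y => by split; exacts [hp0 y, le_rfl]) (fun y => by split <;> simp [hp0 y])
  -- indicator comparison
  have hsθ : Summable (p θ) := summable_of_tsum_one _ (hpsum θ)
  apply Summable.tsum_le_tsum
  · intro x
    by_cases h : PT x ≤ t
    · have : PMD x ≤ t := le_trans (key x) h
      simp [h, this]
    · by_cases h2 : PMD x ≤ t <;> simp [h, h2, hp θ x]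
  · exact hsθ.of_nonneg_of_le (fun x => by split; exacts [hp θ x, le_rfl]) (fun x => by split <;> simp [hp θ x])
  · exact hsθ.of_nonneg_of_le (fun x => by split; exacts [hp θ x, le_rfl]) (fun x => by split <;> simp [hp θ x])
end

section
/- If R is injective and agrees with T, then for every t ∈ [0,1], Pr₀{P^T(X) ≤ t} ≤ Pr₀{P^{MD}(X) ≤ t} ≤ t; that is, under the null distribution the MD natural p-value is stochastically greater than or equal to a uniform random variable (hence valid) while being stochastically less than or equal to the natural p-value based on T. -/
/-- If `R` is injective and agrees with `T`, then under the null,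
for every `t ∈ [0,1]`, `Pr₀{P^T(X) ≤ t} ≤ Pr₀{P^{MD}(X) ≤ t} ≤ t`: the MD
natural p-value is valid (stochastically ≥ uniform) while stochastically less
than or equal to the natural p-value based on `T`. -/
theorem stmt_8 {𝒳 : Type*} [Countable 𝒳]
    (p₀ : 𝒳 → ℝ) (hp₀ : ∀ x, 0 ≤ p₀ x) (hp₀sum : ∑' x, p₀ x = 1)
    (T : 𝒳 → ℝ) (R : 𝒳 → ℕ) (hRinj : Function.Injective R)
    (hagree : ∀ x y, T x > T y → R x < R y)
    (PT PMD : 𝒳 → ℝ)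
    (hPT : ∀ x, PT x = ∑' y, if T y ≥ T x then p₀ y else 0)
    (hPMD : ∀ x, PMD x = ∑' y, if R y ≤ R x then p₀ y else 0) :
    ∀ t ∈ Set.Icc (0:ℝ) 1,
      (∑' x, if PT x ≤ t then p₀ x else 0) ≤ (∑' x, if PMD x ≤ t then p₀ x else 0)
        ∧ (∑' x, if PMD x ≤ t then p₀ x else 0) ≤ t := by
  intro t ht
  obtain ⟨ht0, ht1⟩ := ht
  -- p₀ is summable
  have hsum : Summable p₀ := by
    by_contra h
    rw [tsum_eq_zero_of_not_summable h] at hp₀sum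
    norm_num at hp₀sum
  have hind : ∀ (P : 𝒳 → Prop) [DecidablePred P],
      Summable (fun x => if P x then p₀ x else 0) := by
    intro P _
    refine hsum.of_nonneg_of_le (fun x => ?_) (fun x => ?_)
    · split <;> simp [hp₀]
    · split <;> simp [hp₀]
  -- pointwise PMD ≤ PT
  have hMDle : ∀ x, PMD x ≤ PT x := by
    intro x
    rw [hPMD, hPT]
    refine Summable.tsum_le_tsum (fun y => ?_) (hind _) (hind _)
    by_cases h : R y ≤ R x
    · have hT : T y ≥ T x := by
        by_contra hc
        exact absurd (hagree x y (lt_of_not_ge hc)) (not_lt.mpr h)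
      simp [h, hT]
    · simp only [if_neg h]
      split <;> simp [hp₀]
  constructor
  · refine Summable.tsum_le_tsum (fun x => ?_) (hind _) (hind _)
    by_cases h : PT x ≤ t
    · simp [h, le_trans (hMDle x) h]
    · simp [h]
      split <;> simp [hp₀]
  · -- validity
    refine Summable.tsum_le_of_sum_le (hind _) (fun s => ?_)
    classical
    have hfilter : (∑ x ∈ s, if PMD x ≤ t then p₀ x else 0)
        = ∑ x ∈ s.filter (fun x => PMD x ≤ t), p₀ x := by
      rw [Finset.sum_filter]
    rw [hfilter]
    set s' := s.filter (fun x => PMD x ≤ t) with hs'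
    rcases s'.eq_empty_or_nonempty with he | hne
    · simp [he, ht0]
    · obtain ⟨b, hb, hbmax⟩ := s'.exists_max_image R hne
      have hbt : PMD b ≤ t := (Finset.mem_filter.mp hb).2
      calc ∑ x ∈ s', p₀ x = ∑ x ∈ s', (if R x ≤ R b then p₀ x else 0) := by
            refine Finset.sum_congr rfl (fun x hx => ?_)
            simp [hbmax x hx]
        _ ≤ ∑' x, (if R x ≤ R b then p₀ x else 0) := by
            refine Summable.sum_le_tsum s' (fun x _ => ?_) (hind _)
            split <;> simp [hp₀]
        _ = PMD b := (hPMD b).symm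
        _ ≤ t := hbt
end

section
/- Let α ∈ [0,1], let φ be a size-α test based on T with cutoff k and randomization constant γ, and let ψ be a minimally discrete size-α test based on R, where R is injective and agrees with T, and assume p₀(x) > 0 for every x ∈ 𝒳. Then the conditional expectation of ψ given T(X) equals φ: (i) ψ(x) = 1 whenever T(x) > k, (ii) ψ(x) = 0 whenever T(x) < k, and (iii) Σ_{x : T(x) = k} ψ(x)p₀(x) = γ·Pr₀{T(X) = k}. -/
/-- If `φ` is a size-α test based on `T` (cutoff `k`,
randomization constant `γ`) and `ψ` an MD size-α test based on `R` (injective,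
agreeing with `T`), with `p₀ > 0` everywhere, then the conditional expectation
of `ψ` given `T(X)` equals `φ`: (i) `ψ(x) = 1` when `T(x) > k`, (ii) `ψ(x) = 0`
when `T(x) < k`, and (iii) `Σ_{x : T(x)=k} ψ(x)p₀(x) = γ·Pr₀{T(X) = k}`. -/
theorem stmt_10 {𝒳 : Type*} [Countable 𝒳]
    (p₀ : 𝒳 → ℝ) (hp₀pos : ∀ x, 0 < p₀ x) (hp₀sum : ∑' x, p₀ x = 1)
    (T : 𝒳 → ℝ) (R : 𝒳 → ℕ) (hRinj : Function.Injective R)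
    (hagree : ∀ x y, T x > T y → R x < R y)
    (α : ℝ) (hα : α ∈ Set.Icc (0:ℝ) 1)
    (φ : 𝒳 → ℝ) (hφ01 : ∀ x, φ x ∈ Set.Icc (0:ℝ) 1)
    (k : ℝ) (γ : ℝ) (hγ : γ ∈ Set.Icc (0:ℝ) 1)
    (hφ1 : ∀ x, T x > k → φ x = 1) (hφ2 : ∀ x, T x = k → φ x = γ)
    (hφ3 : ∀ x, T x < k → φ x = 0) (hφα : ∑' x, φ x * p₀ x = α)
    (ψ : 𝒳 → ℝ) (hψ01 : ∀ x, ψ x ∈ Set.Icc (0:ℝ) 1)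
    (kstar : ℕ) (γstar : ℝ) (hγstar : γstar ∈ Set.Icc (0:ℝ) 1)
    (hψ1 : ∀ x, R x < kstar → ψ x = 1) (hψ2 : ∀ x, R x = kstar → ψ x = γstar)
    (hψ3 : ∀ x, R x > kstar → ψ x = 0) (hψα : ∑' x, ψ x * p₀ x = α) :
    (∀ x, T x > k → ψ x = 1) ∧ (∀ x, T x < k → ψ x = 0)
      ∧ (∑' x, if T x = k then ψ x * p₀ x else 0)
          = γ * ∑' x, if T x = k then p₀ x else 0 := by
  classical

  have hpsum : Summable p₀ := by
    by_contra h
    rw [tsum_eq_zero_of_not_summable h] at hp₀sum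
    norm_num at hp₀sum
  have hφsum : Summable (fun y => φ y * p₀ y) :=
    hpsum.of_nonneg_of_le (fun y => mul_nonneg (hφ01 y).1 (hp₀pos y).le)
      (fun y => by nlinarith [(hφ01 y).2, hp₀pos y])
  have hψsum : Summable (fun y => ψ y * p₀ y) :=
    hpsum.of_nonneg_of_le (fun y => mul_nonneg (hψ01 y).1 (hp₀pos y).le)
      (fun y => by nlinarith [(hψ01 y).2, hp₀pos y])
  have hTR : ∀ a b : 𝒳, R b ≤ R a → T a ≤ T b := by
    intro a b h
    by_contra hlt
    exact absurd (hagree a b (lt_of_not_ge hlt)) (not_lt.mpr h)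
  -- Part (i)
  have part1 : ∀ x, T x > k → ψ x = 1 := by
    intro x hTx
    by_contra hne
    have hψx : ψ x < 1 := lt_of_le_of_ne (hψ01 x).2 hne
    have hk : kstar ≤ R x := by
      by_contra h
      push_neg at h
      exact hne (hψ1 x h)
    set c := (1 - ψ x) * p₀ x with hc_def
    have hc : 0 < c := mul_pos (by linarith) (hp₀pos x)
    set f := fun y => if R y ≤ R x then p₀ y else 0 with hf_def
    have hfsum : Summable f := hpsum.of_nonneg_of_le
      (fun y => by by_cases h : R y ≤ R x <;> simp [hf_def, h, (hp₀pos y).le])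
      (fun y => by by_cases h : R y ≤ R x <;> simp [hf_def, h, (hp₀pos y).le])
    have hh : Summable (fun y => if y = x then c else 0) := ⟨c, hasSum_ite_eq x c⟩
    have h1 : ∑' y, f y ≤ α := by
      rw [← hφα]
      refine Summable.tsum_le_tsum (fun y => ?_) hfsum hφsum
      by_cases h : R y ≤ R x
      · have hTy : T y > k := lt_of_lt_of_le hTx (hTR x y h)
        simp [hf_def, h, hφ1 y hTy]
      · simp only [hf_def, h, if_false]
        exact mul_nonneg (hφ01 y).1 (hp₀pos y).le
    have h2 : α ≤ (∑' y, f y) - c := by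
      rw [← hψα]
      have key := Summable.tsum_le_tsum (f := fun y => ψ y * p₀ y)
        (g := fun y => f y - (if y = x then c else 0)) (fun y => ?_) hψsum (hfsum.sub hh)
      · rwa [Summable.tsum_sub hfsum hh, tsum_ite_eq] at key
      · by_cases hy : y = x
        · subst hy
          simp only [hf_def, le_refl, if_true, if_pos rfl, hc_def]
          exact le_of_eq (by ring)
        · simp only [hy, if_false, sub_zero]
          by_cases h : R y ≤ R x
          · simp only [hf_def, h, if_true]
            nlinarith [(hψ01 y).2, hp₀pos y]
          · have : kstar < R y := lt_of_le_of_lt hk (lt_of_not_ge h)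
            simp [hf_def, h, hψ3 y this]
    linarith
  -- Part (ii)
  have part2 : ∀ x, T x < k → ψ x = 0 := by
    intro x hTx
    by_contra hne
    have hψx : 0 < ψ x := lt_of_le_of_ne (hψ01 x).1 (Ne.symm hne)
    have hk : R x ≤ kstar := by
      by_contra h
      push_neg at h
      exact hne (hψ3 x h)
    set c := ψ x * p₀ x with hc_def
    have hc : 0 < c := mul_pos hψx (hp₀pos x)
    set f := fun y => if R y < R x then p₀ y else 0 with hf_def
    have hfsum : Summable f := hpsum.of_nonneg_of_le
      (fun y => by by_cases h : R y < R x <;> simp [hf_def, h, (hp₀pos y).le])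
      (fun y => by by_cases h : R y < R x <;> simp [hf_def, h, (hp₀pos y).le])
    have hh : Summable (fun y => if y = x then c else 0) := ⟨c, hasSum_ite_eq x c⟩
    have h1 : α ≤ ∑' y, f y := by
      rw [← hφα]
      refine Summable.tsum_le_tsum (fun y => ?_) hφsum hfsum
      by_cases h : R y < R x
      · simp only [hf_def, h, if_true]
        nlinarith [(hφ01 y).2, hp₀pos y]
      · have hTy : T y < k := lt_of_le_of_lt (hTR y x (not_lt.mp h)) hTx
        simp only [hf_def, h, if_false, hφ3 y hTy, zero_mul, le_refl]
    have h2 : (∑' y, f y) + c ≤ α := by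
      rw [← hψα]
      have key := Summable.tsum_le_tsum (f := fun y => f y + (if y = x then c else 0))
        (g := fun y => ψ y * p₀ y) (fun y => ?_) (hfsum.add hh) hψsum
      · rwa [Summable.tsum_add hfsum hh, tsum_ite_eq] at key
      · by_cases hy : y = x
        · subst hy
          simp [hf_def, lt_irrefl, hc_def]
        · simp only [hy, if_false, add_zero]
          by_cases h : R y < R x
          · have : R y < kstar := lt_of_lt_of_le h hk
            simp [hf_def, h, hψ1 y this]
          · simp only [hf_def, h, if_false]
            exact mul_nonneg (hψ01 y).1 (hp₀pos y).le
    linarith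
  refine ⟨part1, part2, ?_⟩
  -- Part (iii)
  have hA : Summable (fun y => if T y = k then ψ y * p₀ y else 0) := hpsum.of_nonneg_of_le
    (fun y => by by_cases h : T y = k <;>
      simp [h, mul_nonneg (hψ01 y).1 (hp₀pos y).le])
    (fun y => by by_cases h : T y = k <;> simp [h, (hp₀pos y).le] <;>
      nlinarith [(hψ01 y).2, hp₀pos y])
  have hB : Summable (fun y => if T y > k then p₀ y else 0) := hpsum.of_nonneg_of_le
    (fun y => by by_cases h : T y > k <;> simp [h, (hp₀pos y).le])
    (fun y => by by_cases h : T y > k <;> simp [h, (hp₀pos y).le])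
  have hC : Summable (fun y => if T y = k then p₀ y else 0) := hpsum.of_nonneg_of_le
    (fun y => by by_cases h : T y = k <;> simp [h, (hp₀pos y).le])
    (fun y => by by_cases h : T y = k <;> simp [h, (hp₀pos y).le])
  have hC' : Summable (fun y => if T y = k then γ * p₀ y else 0) := by
    have : (fun y => if T y = k then γ * p₀ y else 0)
        = fun y => γ * (if T y = k then p₀ y else 0) := by
      funext y
      by_cases h : T y = k <;> simp [h]
    rw [this]
    exact hC.mul_left γ
  have e1 : α = (∑' y, if T y = k then ψ y * p₀ y else 0)
      + ∑' y, (if T y > k then p₀ y else 0) := by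
    rw [← hψα, ← Summable.tsum_add hA hB]
    congr 1
    funext y
    rcases lt_trichotomy (T y) k with h | h | h
    · simp [h.ne, not_lt.mpr h.le, part2 y h]
    · simp [h, lt_irrefl]
    · simp [h.ne', h, part1 y h]
  have e2 : α = γ * (∑' y, if T y = k then p₀ y else 0)
      + ∑' y, (if T y > k then p₀ y else 0) := by
    have : γ * (∑' y, if T y = k then p₀ y else 0)
        = ∑' y, (if T y = k then γ * p₀ y else 0) := by
      rw [← tsum_mul_left]
      congr 1
      funext y
      by_cases h : T y = k <;> simp [h]
    rw [this, ← hφα, ← Summable.tsum_add hC' hB]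
    congr 1
    funext y
    rcases lt_trichotomy (T y) k with h | h | h
    · simp [h.ne, not_lt.mpr h.le, hφ3 y h]
    · simp [h, lt_irrefl, hφ2 y h]
    · simp [h.ne', h, hφ1 y h]
  linarith
end

section
/- Let α ∈ [0,1], let φ be a size-α test based on T and let ψ be a minimally discrete size-α test based on R, where R is injective and agrees with T, assume p₀(x) > 0 for every x ∈ 𝒳, and assume T is sufficient for the family. Then for every θ ∈ Θ the two tests have equal power: Σ_x ψ(x)p_θ(x) = Σ_x φ(x)p_θ(x). -/
/-- If `φ` is a size-α test based on `T`, `ψ` an MD size-α test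
based on `R` (injective, agreeing with `T`), `p₀ > 0` everywhere, and `T` is
sufficient for the family `{p_θ}` (i.e. `p_θ(x)·Pr₀{T(X)=T(x)} =
p₀(x)·Pr_θ{T(X)=T(x)}` for all `θ, x`), then the two tests have equal power:
`Σ_x ψ(x)p_θ(x) = Σ_x φ(x)p_θ(x)` for every `θ`. -/
theorem stmt_11 {𝒳 : Type*} [Countable 𝒳] {Θ : Type*}
    (p : Θ → 𝒳 → ℝ) (hp : ∀ θ x, 0 ≤ p θ x) (hpsum : ∀ θ, ∑' x, p θ x = 1)
    (θ₀ : Θ) (p₀ : 𝒳 → ℝ) (hnull : p θ₀ = p₀)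
    (hp₀pos : ∀ x, 0 < p₀ x)
    (T : 𝒳 → ℝ) (R : 𝒳 → ℕ) (hRinj : Function.Injective R)
    (hagree : ∀ x y, T x > T y → R x < R y)
    (hsuff : ∀ (θ : Θ) (x : 𝒳),
      p θ x * (∑' y, if T y = T x then p₀ y else 0)
        = p₀ x * ∑' y, if T y = T x then p θ y else 0)
    (α : ℝ) (hα : α ∈ Set.Icc (0:ℝ) 1)
    (φ : 𝒳 → ℝ) (hφ01 : ∀ x, φ x ∈ Set.Icc (0:ℝ) 1)
    (k : ℝ) (γ : ℝ) (hγ : γ ∈ Set.Icc (0:ℝ) 1)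
    (hφ1 : ∀ x, T x > k → φ x = 1) (hφ2 : ∀ x, T x = k → φ x = γ)
    (hφ3 : ∀ x, T x < k → φ x = 0) (hφα : ∑' x, φ x * p₀ x = α)
    (ψ : 𝒳 → ℝ) (hψ01 : ∀ x, ψ x ∈ Set.Icc (0:ℝ) 1)
    (kstar : ℕ) (γstar : ℝ) (hγstar : γstar ∈ Set.Icc (0:ℝ) 1)
    (hψ1 : ∀ x, R x < kstar → ψ x = 1) (hψ2 : ∀ x, R x = kstar → ψ x = γstar)
    (hψ3 : ∀ x, R x > kstar → ψ x = 0) (hψα : ∑' x, ψ x * p₀ x = α) :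
    ∀ θ : Θ, ∑' x, ψ x * p θ x = ∑' x, φ x * p θ x := by
  -- Summability facts
  have hpθsum : ∀ θ, Summable (p θ) := by
    intro θ
    by_contra h
    have := hpsum θ
    rw [tsum_eq_zero_of_not_summable h] at this
    norm_num at this
  have hmulsum : ∀ (f : 𝒳 → ℝ), (∀ x, f x ∈ Set.Icc (0:ℝ) 1) → ∀ θ,
      Summable (fun x => f x * p θ x) := by
    intro f hf θ
    refine Summable.of_nonneg_of_le (fun x => mul_nonneg (hf x).1 (hp θ x))
      (fun x => ?_) (hpθsum θ)
    calc f x * p θ x ≤ 1 * p θ x := mul_le_mul_of_nonneg_right (hf x).2 (hp θ x)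
    _ = p θ x := one_mul _
  have hp₀sum : Summable p₀ := hnull ▸ hpθsum θ₀
  have hφp₀sum : Summable (fun x => φ x * p₀ x) := hnull ▸ hmulsum φ hφ01 θ₀
  have hψp₀sum : Summable (fun x => ψ x * p₀ x) := hnull ▸ hmulsum ψ hψ01 θ₀
  -- ψ = 1 above the threshold
  have hTnotlt : ∀ x y : 𝒳, R y ≤ R x → ¬ (T x > T y) := by
    intro x y hR hT
    exact absurd (hagree x y hT) (by omega)
  have hψhigh : ∀ x, T x > k → ψ x = 1 := by
    intro x hx
    by_contra hne
    have hxlt : ψ x < 1 := lt_of_le_of_ne (hψ01 x).2 hne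
    have hkx : kstar ≤ R x := by
      by_contra h
      exact hne (hψ1 x (by omega))
    have hle : ∀ y, ψ y * p₀ y ≤ φ y * p₀ y := by
      intro y
      rcases eq_or_lt_of_le (hψ01 y).1 with h0 | h0
      · rw [← h0]; simpa using mul_nonneg (hφ01 y).1 (le_of_lt (hp₀pos y))
      · have hRy : R y ≤ kstar := by
          by_contra h
          have := hψ3 y (by omega)
          simp [this] at h0
        have hTy : T y > k := by
          have := hTnotlt x y (le_trans hRy hkx)
          push_neg at this
          linarith
        rw [hφ1 y hTy]
        exact mul_le_mul_of_nonneg_right (hψ01 y).2 (le_of_lt (hp₀pos y))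
    have hstrict : ψ x * p₀ x < φ x * p₀ x := by
      rw [hφ1 x hx]
      exact mul_lt_mul_of_pos_right (by linarith) (hp₀pos x)
    have := Summable.tsum_lt_tsum hle hstrict hψp₀sum hφp₀sum
    rw [hφα, hψα] at this
    exact lt_irrefl _ this
  -- ψ = 0 below the threshold
  have hψlow : ∀ x, T x < k → ψ x = 0 := by
    intro x hx
    by_contra hne
    have hxpos : 0 < ψ x := lt_of_le_of_ne (hψ01 x).1 (Ne.symm hne)
    have hkx : R x ≤ kstar := by
      by_contra h
      exact hne (hψ3 x (by omega))
    have hle : ∀ y, φ y * p₀ y ≤ ψ y * p₀ y := by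
      intro y
      rcases eq_or_lt_of_le (hφ01 y).1 with h0 | h0
      · rw [← h0]; simpa using mul_nonneg (hψ01 y).1 (le_of_lt (hp₀pos y))
      · have hTy : ¬ (T y < k) := by
          intro h
          have := hφ3 y h
          simp [this] at h0
        have hTyx : T y > T x := by push_neg at hTy; linarith
        have hRy : R y < kstar := lt_of_lt_of_le (hagree y x hTyx) hkx
        rw [hψ1 y hRy]
        exact mul_le_mul_of_nonneg_right (hφ01 y).2 (le_of_lt (hp₀pos y))
    have hstrict : φ x * p₀ x < ψ x * p₀ x := by
      rw [hφ3 x hx]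
      simpa using mul_pos hxpos (hp₀pos x)
    have := Summable.tsum_lt_tsum hle hstrict hφp₀sum hψp₀sum
    rw [hφα, hψα] at this
    exact lt_irrefl _ this
  -- off the level set {T = k}, φ = ψ
  have hagree' : ∀ x, T x ≠ k → ψ x = φ x := by
    intro x hxk
    rcases lt_trichotomy (T x) k with h | h | h
    · rw [hψlow x h, hφ3 x h]
    · exact absurd h hxk
    · rw [hψhigh x h, hφ1 x h]
  -- main computation
  intro θ
  have hφpθsum := hmulsum φ hφ01 θ
  have hψpθsum := hmulsum ψ hψ01 θ
  have key : ∑' x, (ψ x * p θ x - φ x * p θ x) = ∑' x, ψ x * p θ x - ∑' x, φ x * p θ x :=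
    Summable.tsum_sub hψpθsum hφpθsum
  have key₀ : ∑' x, (ψ x * p₀ x - φ x * p₀ x) = 0 := by
    rw [Summable.tsum_sub hψp₀sum hφp₀sum, hφα, hψα, sub_self]
  set S₀ : ℝ := ∑' y, if T y = k then p₀ y else 0 with hS₀
  set Sθ : ℝ := ∑' y, if T y = k then p θ y else 0 with hSθ
  set c : ℝ := Sθ / S₀ with hc
  have hlevelsum : Summable (fun y => if T y = k then p₀ y else 0) := by
    refine Summable.of_nonneg_of_le (fun y => ?_) (fun y => ?_) hp₀sum
    · split <;> [exact le_of_lt (hp₀pos y); exact le_refl 0]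
    · split <;> [exact le_refl _; exact le_of_lt (hp₀pos y)]
  have hptheta : ∀ x, T x = k → p θ x = c * p₀ x := by
    intro x hxk
    have hS₀pos : 0 < S₀ := by
      have hle : (if T x = k then p₀ x else 0) ≤ S₀ := by
        refine Summable.le_tsum hlevelsum x (fun j _ => ?_)
        split <;> [exact le_of_lt (hp₀pos j); exact le_refl 0]
      rw [if_pos hxk] at hle
      exact lt_of_lt_of_le (hp₀pos x) hle
    have hs := hsuff θ x
    rw [hxk] at hs
    rw [hc]
    field_simp
    linarith [hs]
  have hpt : ∀ x, ψ x * p θ x - φ x * p θ x = c * (ψ x * p₀ x - φ x * p₀ x) := by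
    intro x
    by_cases hxk : T x = k
    · rw [hptheta x hxk]; ring
    · rw [hagree' x hxk]; ring
  have : ∑' x, (ψ x * p θ x - φ x * p θ x) = 0 := by
    calc ∑' x, (ψ x * p θ x - φ x * p θ x)
        = ∑' x, c * (ψ x * p₀ x - φ x * p₀ x) := by
          exact tsum_congr hpt
      _ = c * ∑' x, (ψ x * p₀ x - φ x * p₀ x) := tsum_mul_left
      _ = 0 := by rw [key₀, mul_zero]
  rw [key] at this
  linarith
end

section
/- Assume R is injective and agrees with T, p₀(x) > 0 for every x ∈ 𝒳, and T is sufficient for the family. Then the randomized p-value based on T and the minimally randomized p-value based on R are equal in distribution under every θ ∈ Θ: for every θ ∈ Θ and t ∈ [0,1], Σ_x p_θ(x)·Leb{u ∈ [0,1] : P^{MD}(x,u) ≤ t} = Σ_x p_θ(x)·Leb{u ∈ [0,1] : P^T(x,u) ≤ t}, where Leb denotes Lebesgue measure. -/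
open MeasureTheory

lemma meas_aux (a b t : ℝ) (hb : 0 < b) :
    (volume {u : ℝ | u ∈ Set.Icc (0:ℝ) 1 ∧ a + u * b ≤ t}).toReal
      = (min t (a + b) - min t a) / b := by
  have hset : {u : ℝ | u ∈ Set.Icc (0:ℝ) 1 ∧ a + u * b ≤ t}
      = Set.Icc 0 (min 1 ((t - a) / b)) := by
    ext u
    simp only [Set.mem_setOf_eq, Set.mem_Icc, le_min_iff]
    constructor
    · rintro ⟨⟨h0, h1⟩, h2⟩
      exact ⟨h0, h1, by rw [le_div_iff₀ hb]; linarith⟩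
    · rintro ⟨h0, h1, h2⟩
      rw [le_div_iff₀ hb] at h2
      exact ⟨⟨h0, h1⟩, by linarith⟩
  rw [hset, Real.volume_Icc, ENNReal.toReal_ofReal']
  rcases le_total t a with h | h
  · rw [min_eq_left h, min_eq_left (by linarith : t ≤ a + b)]
    have : (t - a) / b ≤ 0 := div_nonpos_of_nonpos_of_nonneg (by linarith) hb.le
    rw [max_eq_right (by rcases le_total (1:ℝ) ((t-a)/b) with h'|h' <;>
      [rw [min_eq_left h']; rw [min_eq_right h']] <;> nlinarith)]
    simp
  · rcases le_total t (a + b) with h' | h'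
    · rw [min_eq_left h', min_eq_right h]
      have h2 : (t - a) / b ≤ 1 := by rw [div_le_one hb]; linarith
      have h3 : 0 ≤ (t - a) / b := div_nonneg (by linarith) hb.le
      rw [min_eq_right h2, sub_zero, max_eq_left h3]
    · rw [min_eq_right h', min_eq_right h]
      have h2 : (1:ℝ) ≤ (t - a) / b := by rw [le_div_iff₀ hb]; linarith
      rw [min_eq_left h2, sub_zero, max_eq_left zero_le_one]
      field_simp; ring

-- general telescoping lemma
lemma telescope_min (C : ℕ → ℝ) (S q t : ℝ) (hmono : Monotone C) (hC0 : C 0 = 0)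
    (hCq : Filter.Tendsto C Filter.atTop (nhds q)) :
    HasSum (fun n => min t (S + C (n + 1)) - min t (S + C n)) (min t (S + q) - min t S) := by
  have hgnn : ∀ n, 0 ≤ min t (S + C (n + 1)) - min t (S + C n) := by
    intro n
    have := hmono (Nat.le_succ n)
    have : S + C n ≤ S + C (n + 1) := by linarith
    simp only [sub_nonneg]
    exact min_le_min le_rfl this
  rw [hasSum_iff_tendsto_nat_of_nonneg hgnn]
  have hpart : ∀ n : ℕ, ∑ i ∈ Finset.range n, (min t (S + C (i + 1)) - min t (S + C i))
      = min t (S + C n) - min t S := by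
    intro n
    rw [Finset.sum_range_sub (fun i => min t (S + C i)), hC0, add_zero]
  simp only [hpart]
  exact (Filter.Tendsto.min tendsto_const_nhds (hCq.const_add S)).sub tendsto_const_nhds

lemma fiber_sum {𝒳 : Type*} [Countable 𝒳] (p₀ : 𝒳 → ℝ) (hpos : ∀ x, 0 < p₀ x)
    (hsum : Summable p₀) (T : 𝒳 → ℝ) (R : 𝒳 → ℕ) (hRinj : Function.Injective R)
    (hagree : ∀ x y, T x > T y → R x < R y) (t : ℝ) (x₀ : 𝒳) :
    ∑' (x : T ⁻¹' {T x₀}),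
        (min t ((∑' y, if R y < R x.val then p₀ y else 0) + p₀ x.val)
          - min t (∑' y, if R y < R x.val then p₀ y else 0))
      = min t ((∑' y, if T x₀ < T y then p₀ y else 0)
            + ∑' y, if T y = T x₀ then p₀ y else 0)
        - min t (∑' y, if T x₀ < T y then p₀ y else 0) := by
  classical
  have hsummable : ∀ (P : 𝒳 → Prop) (_ : DecidablePred P),
      Summable (fun z => if P z then p₀ z else 0) := by
    intro P _
    refine Summable.of_nonneg_of_le (fun z => ?_) (fun z => ?_) hsum <;> split <;>
      simp [le_refl, (hpos _).le]
  have hle : ∀ (P Q : 𝒳 → Prop) (_ : DecidablePred P) (_ : DecidablePred Q), (∀ z, P z → Q z) →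
      (∑' z, if P z then p₀ z else 0) ≤ ∑' z, if Q z then p₀ z else 0 := by
    intro P Q _ _ h
    refine Summable.tsum_le_tsum (fun z => ?_) (hsummable _ _) (hsummable _ _)
    by_cases hz : P z
    · rw [if_pos hz, if_pos (h z hz)]
    · rw [if_neg hz]
      split
      exacts [(hpos _).le, le_rfl]
  set C : ℕ → ℝ := fun n => ∑' z, if T z = T x₀ ∧ R z < n then p₀ z else 0 with hCdef
  have hCn : ∀ n, C n = ∑' z, if T z = T x₀ ∧ R z < n then p₀ z else 0 := fun n => rfl
  -- (a) decomposition of A x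
  have hA : ∀ x : 𝒳, T x = T x₀ →
      (∑' y, if R y < R x then p₀ y else 0)
        = (∑' y, if T x₀ < T y then p₀ y else 0) + C (R x) := by
    intro x hx
    rw [hCn]
    calc (∑' y, if R y < R x then p₀ y else 0)
        = ∑' y, ((if T x₀ < T y then p₀ y else 0)
            + (if T y = T x₀ ∧ R y < R x then p₀ y else 0)) := by
          refine tsum_congr fun y => ?_
          rcases lt_trichotomy (T y) (T x) with h | h | h
          · have h1 : R x < R y := hagree x y h
            rw [if_neg (by omega), if_neg (by rw [← hx]; exact not_lt.mpr h.le),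
              if_neg (by push_neg; intro h2; omega)]
            simp
          · have h2 : ¬ T x₀ < T y := by rw [← hx, h]; exact lt_irrefl _
            rw [if_neg h2, zero_add]
            by_cases h3 : R y < R x
            · rw [if_pos h3, if_pos ⟨h.trans hx, h3⟩]
            · rw [if_neg h3, if_neg (by tauto)]
          · have h1 : R y < R x := hagree y x h
            rw [if_pos h1, if_pos (hx ▸ h), if_neg (fun h2 => absurd (h2.1 ▸ h) (by
              rw [hx]; exact lt_irrefl _)), add_zero]
      _ = (∑' y, if T x₀ < T y then p₀ y else 0)
            + ∑' y, if T y = T x₀ ∧ R y < R x then p₀ y else 0 :=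
          ((hsummable _ _).hasSum.add (hsummable _ _).hasSum).tsum_eq
  -- (b) step
  have hstep : ∀ x : 𝒳, T x = T x₀ → C (R x + 1) = C (R x) + p₀ x := by
    intro x hx
    rw [hCn, hCn]
    calc (∑' z, if T z = T x₀ ∧ R z < R x + 1 then p₀ z else 0)
        = ∑' z, ((if T z = T x₀ ∧ R z < R x then p₀ z else 0)
            + (if z = x then p₀ z else 0)) := by
          refine tsum_congr fun z => ?_
          by_cases hz : z = x
          · subst hz
            rw [if_pos rfl, if_pos ⟨hx, Nat.lt_succ_self _⟩, if_neg (by simp), zero_add]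
          · have hR : R z ≠ R x := fun h => hz (hRinj h)
            rw [if_neg hz, add_zero]
            by_cases h1 : T z = T x₀ ∧ R z < R x
            · rw [if_pos h1, if_pos ⟨h1.1, by omega⟩]
            · rw [if_neg h1, if_neg (by
                push_neg at h1 ⊢
                intro h2
                have := h1 h2
                omega)]
      _ = (∑' z, if T z = T x₀ ∧ R z < R x then p₀ z else 0)
            + ∑' z, (if z = x then p₀ z else 0) :=
          ((hsummable _ _).hasSum.add (hsummable _ _).hasSum).tsum_eq
      _ = (∑' z, if T z = T x₀ ∧ R z < R x then p₀ z else 0) + p₀ x := by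
          congr 1
          exact (tsum_eq_single x (fun b hb => if_neg hb)).trans (if_pos rfl)
  -- (c) no jump
  have hnostep : ∀ n : ℕ, (∀ x : 𝒳, T x = T x₀ → R x ≠ n) → C (n + 1) = C n := by
    intro n hn
    rw [hCn, hCn]
    refine tsum_congr fun z => ?_
    by_cases h1 : T z = T x₀ ∧ R z < n
    · rw [if_pos ⟨h1.1, by omega⟩, if_pos h1]
    · rw [if_neg h1, if_neg (by
        push_neg at h1 ⊢
        intro h2
        have h3 := h1 h2
        have h4 := hn z h2
        omega)]
  -- monotone
  have hmono : Monotone C := by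
    intro n m hnm
    rw [hCn, hCn]
    exact hle _ _ _ _ (fun z hz => ⟨hz.1, by omega⟩)
  -- C 0 = 0
  have hC0 : C 0 = 0 := by
    rw [hCn]
    convert tsum_zero with z
    rw [if_neg (by simp)]
  -- tendsto
  have hfin : ∀ n : ℕ, {z : 𝒳 | R z < n}.Finite := fun n =>
    Set.Finite.preimage hRinj.injOn (Set.finite_Iio n)
  have hCfin : ∀ n, C n = ∑ z ∈ (hfin n).toFinset, (if T z = T x₀ then p₀ z else 0) := by
    intro n
    rw [hCn]
    rw [tsum_eq_sum (s := (hfin n).toFinset) (fun b hb => if_neg (fun h => hb (by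
      rw [Set.Finite.mem_toFinset]
      exact h.2)))]
    refine Finset.sum_congr rfl fun z hz => ?_
    have hzn : R z < n := by simpa [Set.Finite.mem_toFinset] using hz
    by_cases h1 : T z = T x₀
    · rw [if_pos ⟨h1, hzn⟩, if_pos h1]
    · rw [if_neg (by tauto), if_neg h1]
  have hCq : Filter.Tendsto C Filter.atTop
      (nhds (∑' y, if T y = T x₀ then p₀ y else 0)) := by
    have hhs : HasSum (fun z => if T z = T x₀ then p₀ z else 0)
        (∑' y, if T y = T x₀ then p₀ y else 0) := (hsummable _ _).hasSum
    have hφmono : Monotone (fun n => (hfin n).toFinset) := by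
      intro n m h
      intro z hz
      rw [Set.Finite.mem_toFinset] at hz ⊢
      simp only [Set.mem_setOf_eq] at hz ⊢
      omega
    have hφtop : Filter.Tendsto (fun n => (hfin n).toFinset) Filter.atTop Filter.atTop := by
      refine Filter.tendsto_atTop_finset_of_monotone hφmono fun x => ⟨R x + 1, ?_⟩
      rw [Set.Finite.mem_toFinset]
      exact Nat.lt_succ_self _
    have h2 := hhs.comp hφtop
    refine Filter.Tendsto.congr (fun n => ?_) h2
    exact (hCfin n).symm
  -- telescoping series
  have hgsum := telescope_min C (∑' y, if T x₀ < T y then p₀ y else 0)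
    (∑' y, if T y = T x₀ then p₀ y else 0) t hmono hC0 hCq
  -- reindex
  have hterm : ∀ x : T ⁻¹' {T x₀},
      (min t ((∑' y, if R y < R x.val then p₀ y else 0) + p₀ x.val)
        - min t (∑' y, if R y < R x.val then p₀ y else 0))
      = (fun n => min t ((∑' y, if T x₀ < T y then p₀ y else 0) + C (n + 1))
          - min t ((∑' y, if T x₀ < T y then p₀ y else 0) + C n)) (R x.val) := by
    rintro ⟨x, hx⟩
    have hx' : T x = T x₀ := hx
    simp only []
    rw [hA x hx', hstep x hx', add_assoc]
  have hinj : Function.Injective (fun x : T ⁻¹' {T x₀} => R x.val) :=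
    fun a b h => Subtype.ext (hRinj h)
  have hsupp : Function.support
      (fun n => min t ((∑' y, if T x₀ < T y then p₀ y else 0) + C (n + 1))
          - min t ((∑' y, if T x₀ < T y then p₀ y else 0) + C n))
      ⊆ Set.range (fun x : T ⁻¹' {T x₀} => R x.val) := by
    intro n hn
    by_contra hmem
    apply hn
    have hnone : ∀ x : 𝒳, T x = T x₀ → R x ≠ n := by
      intro x hx he
      exact hmem ⟨⟨x, hx⟩, he⟩
    simp only [hnostep n hnone, sub_self]
  calc ∑' (x : T ⁻¹' {T x₀}),
        (min t ((∑' y, if R y < R x.val then p₀ y else 0) + p₀ x.val)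
          - min t (∑' y, if R y < R x.val then p₀ y else 0))
      = ∑' (x : T ⁻¹' {T x₀}),
          (fun n => min t ((∑' y, if T x₀ < T y then p₀ y else 0) + C (n + 1))
            - min t ((∑' y, if T x₀ < T y then p₀ y else 0) + C n)) (R x.val) :=
        tsum_congr hterm
    _ = ∑' n, (min t ((∑' y, if T x₀ < T y then p₀ y else 0) + C (n + 1))
            - min t ((∑' y, if T x₀ < T y then p₀ y else 0) + C n)) :=
        hinj.tsum_eq hsupp
    _ = min t ((∑' y, if T x₀ < T y then p₀ y else 0)
            + ∑' y, if T y = T x₀ then p₀ y else 0)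
        - min t (∑' y, if T x₀ < T y then p₀ y else 0) := by
        rw [hgsum.tsum_eq]

/-- If `R` is injective and agrees with `T`, `p₀ > 0` everywhere,
and `T` is sufficient for the family, then the randomized p-value based on `T`
and the minimally randomized p-value based on `R` are equal in distribution
under every `θ`: for every `t ∈ [0,1]`,
`Σ_x p_θ(x)·Leb{u ∈ [0,1] : P^{MD}(x,u) ≤ t} = Σ_x p_θ(x)·Leb{u ∈ [0,1] : P^T(x,u) ≤ t}`. -/
theorem stmt_12 {𝒳 : Type*} [Countable 𝒳] {Θ : Type*}
    (p : Θ → 𝒳 → ℝ) (hp : ∀ θ x, 0 ≤ p θ x) (hpsum : ∀ θ, ∑' x, p θ x = 1)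
    (θ₀ : Θ) (p₀ : 𝒳 → ℝ) (hnull : p θ₀ = p₀)
    (hp₀pos : ∀ x, 0 < p₀ x)
    (T : 𝒳 → ℝ) (R : 𝒳 → ℕ) (hRinj : Function.Injective R)
    (hagree : ∀ x y, T x > T y → R x < R y)
    (hsuff : ∀ (θ : Θ) (x : 𝒳),
      p θ x * (∑' y, if T y = T x then p₀ y else 0)
        = p₀ x * ∑' y, if T y = T x then p θ y else 0)
    (PT PMD : 𝒳 → ℝ → ℝ)
    (hPT : ∀ x u, PT x u = (∑' y, if T x < T y then p₀ y else 0)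
      + u * ∑' y, if T y = T x then p₀ y else 0)
    (hPMD : ∀ x u, PMD x u = (∑' y, if R y < R x then p₀ y else 0)
      + u * ∑' y, if R y = R x then p₀ y else 0) :
    ∀ θ : Θ, ∀ t ∈ Set.Icc (0:ℝ) 1,
      (∑' x, p θ x * (volume {u : ℝ | u ∈ Set.Icc (0:ℝ) 1 ∧ PMD x u ≤ t}).toReal)
        = ∑' x, p θ x * (volume {u : ℝ | u ∈ Set.Icc (0:ℝ) 1 ∧ PT x u ≤ t}).toReal := by
  intro θ t _ht
  classical
  -- summability
  have hsump : ∀ θ', Summable (p θ') := by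
    intro θ'
    by_contra h
    have h2 := hpsum θ'
    rw [tsum_eq_zero_of_not_summable h] at h2
    norm_num at h2
  have hsum0 : Summable p₀ := hnull ▸ hsump θ₀
  have hsummable : ∀ (P : 𝒳 → Prop) (_ : DecidablePred P),
      Summable (fun z => if P z then p₀ z else 0) := by
    intro P _
    refine Summable.of_nonneg_of_le (fun z => ?_) (fun z => ?_) hsum0 <;> split <;>
      simp [le_refl, (hp₀pos _).le]
  -- positivity of q
  have hqpos : ∀ x : 𝒳, 0 < ∑' y, if T y = T x then p₀ y else 0 := by
    intro x
    refine lt_of_lt_of_le (hp₀pos x) ?_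
    have hs : Summable (fun y : 𝒳 => if T y = T x then p₀ y else 0) := hsummable _ _
    have h2 := Summable.le_tsum hs x (fun j _ => by split <;> simp [(hp₀pos _).le])
    simpa using h2
  -- Lipschitz property of min t
  have hdiff : ∀ a b : ℝ, 0 ≤ b → 0 ≤ min t (a + b) - min t a ∧ min t (a + b) - min t a ≤ b := by
    intro a b hb
    constructor
    · have h1 : min t a ≤ min t (a + b) := min_le_min le_rfl (by linarith)
      linarith
    · rcases le_total t a with h | h
      · rw [min_eq_left h, min_eq_left (by linarith)]
        simpa using hb
      · rw [min_eq_right h]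
        have h3 : min t (a + b) ≤ a + b := min_le_right _ _
        linarith
  -- measure computations
  have hRx : ∀ x : 𝒳, (∑' y, if R y = R x then p₀ y else 0) = p₀ x := fun x =>
    (tsum_eq_single x (fun b hb => if_neg (fun h => hb (hRinj h)))).trans (if_pos rfl)
  have hPMDmeas : ∀ x : 𝒳, (volume {u : ℝ | u ∈ Set.Icc (0:ℝ) 1 ∧ PMD x u ≤ t}).toReal
      = (min t ((∑' y, if R y < R x then p₀ y else 0) + p₀ x)
          - min t (∑' y, if R y < R x then p₀ y else 0)) / p₀ x := by
    intro x
    have hset : {u : ℝ | u ∈ Set.Icc (0:ℝ) 1 ∧ PMD x u ≤ t}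
        = {u : ℝ | u ∈ Set.Icc (0:ℝ) 1
            ∧ (∑' y, if R y < R x then p₀ y else 0) + u * p₀ x ≤ t} := by
      ext u
      simp only [Set.mem_setOf_eq, hPMD x u, hRx x]
    rw [hset, meas_aux _ _ _ (hp₀pos x)]
  have hPTmeas : ∀ x : 𝒳, (volume {u : ℝ | u ∈ Set.Icc (0:ℝ) 1 ∧ PT x u ≤ t}).toReal
      = (min t ((∑' y, if T x < T y then p₀ y else 0) + ∑' y, if T y = T x then p₀ y else 0)
          - min t (∑' y, if T x < T y then p₀ y else 0))
        / ∑' y, if T y = T x then p₀ y else 0 := by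
    intro x
    have hset : {u : ℝ | u ∈ Set.Icc (0:ℝ) 1 ∧ PT x u ≤ t}
        = {u : ℝ | u ∈ Set.Icc (0:ℝ) 1
            ∧ (∑' y, if T x < T y then p₀ y else 0)
              + u * (∑' y, if T y = T x then p₀ y else 0) ≤ t} := by
      ext u
      simp only [Set.mem_setOf_eq, hPT x u]
    rw [hset, meas_aux _ _ _ (hqpos x)]
  -- the two summand functions
  have hF1sum : Summable (fun x : 𝒳 => p θ x *
      ((min t ((∑' y, if R y < R x then p₀ y else 0) + p₀ x)
        - min t (∑' y, if R y < R x then p₀ y else 0)) / p₀ x)) := by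
    refine Summable.of_nonneg_of_le (fun x => ?_) (fun x => ?_) (hsump θ)
    · exact mul_nonneg (hp θ x) (div_nonneg (hdiff _ _ (hp₀pos x).le).1 (hp₀pos x).le)
    · have h2 := (hdiff (∑' y, if R y < R x then p₀ y else 0) (p₀ x) (hp₀pos x).le).2
      calc p θ x * ((min t ((∑' y, if R y < R x then p₀ y else 0) + p₀ x)
            - min t (∑' y, if R y < R x then p₀ y else 0)) / p₀ x) ≤ p θ x * 1 := by
            refine mul_le_mul_of_nonneg_left ?_ (hp θ x)
            rw [div_le_one (hp₀pos x)]
            exact h2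
        _ = p θ x := mul_one _
  have hF2sum : Summable (fun x : 𝒳 => p θ x *
      ((min t ((∑' y, if T x < T y then p₀ y else 0) + ∑' y, if T y = T x then p₀ y else 0)
        - min t (∑' y, if T x < T y then p₀ y else 0))
        / ∑' y, if T y = T x then p₀ y else 0)) := by
    refine Summable.of_nonneg_of_le (fun x => ?_) (fun x => ?_) (hsump θ)
    · exact mul_nonneg (hp θ x) (div_nonneg (hdiff _ _ (hqpos x).le).1 (hqpos x).le)
    · have h2 := (hdiff (∑' y, if T x < T y then p₀ y else 0)
        (∑' y, if T y = T x then p₀ y else 0) (hqpos x).le).2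
      calc p θ x * ((min t ((∑' y, if T x < T y then p₀ y else 0)
              + ∑' y, if T y = T x then p₀ y else 0)
            - min t (∑' y, if T x < T y then p₀ y else 0))
            / ∑' y, if T y = T x then p₀ y else 0) ≤ p θ x * 1 := by
            refine mul_le_mul_of_nonneg_left ?_ (hp θ x)
            rw [div_le_one (hqpos x)]
            exact h2
        _ = p θ x := mul_one _
  -- fiberwise equality
  have hkey : ∀ v : ℝ,
      (∑' (x : T ⁻¹' {v}), p θ x.val *
        ((min t ((∑' y, if R y < R x.val then p₀ y else 0) + p₀ x.val)
          - min t (∑' y, if R y < R x.val then p₀ y else 0)) / p₀ x.val))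
      = ∑' (x : T ⁻¹' {v}), p θ x.val *
        ((min t ((∑' y, if T x.val < T y then p₀ y else 0)
            + ∑' y, if T y = T x.val then p₀ y else 0)
          - min t (∑' y, if T x.val < T y then p₀ y else 0))
          / ∑' y, if T y = T x.val then p₀ y else 0) := by
    intro v
    by_cases hv : ∃ x₀ : 𝒳, T x₀ = v
    · obtain ⟨x₀, rfl⟩ := hv
      have hqc : ∀ x : 𝒳, T x = T x₀ →
          (∑' y, if T y = T x then p₀ y else 0) = ∑' y, if T y = T x₀ then p₀ y else 0 :=
        fun x hx => tsum_congr fun y => by rw [hx]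
      have hqθc : ∀ x : 𝒳, T x = T x₀ →
          (∑' y, if T y = T x then p θ y else 0) = ∑' y, if T y = T x₀ then p θ y else 0 :=
        fun x hx => tsum_congr fun y => by rw [hx]
      have hSc : ∀ x : 𝒳, T x = T x₀ →
          (∑' y, if T x < T y then p₀ y else 0) = ∑' y, if T x₀ < T y then p₀ y else 0 :=
        fun x hx => tsum_congr fun y => by rw [hx]
      have hq0 : (0:ℝ) < ∑' y, if T y = T x₀ then p₀ y else 0 := hqpos x₀
      have hpθ : ∀ x : 𝒳, T x = T x₀ →
          p θ x = p₀ x * ((∑' y, if T y = T x₀ then p θ y else 0)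
            / (∑' y, if T y = T x₀ then p₀ y else 0)) := by
        intro x hx
        have h1 := hsuff θ x
        rw [hqc x hx, hqθc x hx] at h1
        rw [← mul_div_assoc, eq_div_iff hq0.ne']
        exact h1
      have hfibθ : (∑' (x : T ⁻¹' {T x₀}), p θ x.val)
          = ∑' y, if T y = T x₀ then p θ y else 0 := by
        rw [tsum_subtype]
        refine tsum_congr fun y => ?_
        by_cases h : T y = T x₀ <;>
          simp [Set.indicator_apply, Set.mem_preimage, Set.mem_singleton_iff, h]
      calc ∑' (x : T ⁻¹' {T x₀}), p θ x.val *
            ((min t ((∑' y, if R y < R x.val then p₀ y else 0) + p₀ x.val)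
              - min t (∑' y, if R y < R x.val then p₀ y else 0)) / p₀ x.val)
          = ∑' (x : T ⁻¹' {T x₀}),
            ((∑' y, if T y = T x₀ then p θ y else 0)
              / (∑' y, if T y = T x₀ then p₀ y else 0))
            * (min t ((∑' y, if R y < R x.val then p₀ y else 0) + p₀ x.val)
              - min t (∑' y, if R y < R x.val then p₀ y else 0)) := by
            refine tsum_congr fun x => ?_
            have hx' : T x.val = T x₀ := x.prop
            rw [hpθ x.val hx']
            have hpx := (hp₀pos x.val).ne'
            field_simp
        _ = ((∑' y, if T y = T x₀ then p θ y else 0)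
              / (∑' y, if T y = T x₀ then p₀ y else 0))
            * ∑' (x : T ⁻¹' {T x₀}),
              (min t ((∑' y, if R y < R x.val then p₀ y else 0) + p₀ x.val)
                - min t (∑' y, if R y < R x.val then p₀ y else 0)) := tsum_mul_left
        _ = ((∑' y, if T y = T x₀ then p θ y else 0)
              / (∑' y, if T y = T x₀ then p₀ y else 0))
            * (min t ((∑' y, if T x₀ < T y then p₀ y else 0)
                + ∑' y, if T y = T x₀ then p₀ y else 0)
              - min t (∑' y, if T x₀ < T y then p₀ y else 0)) := by
            rw [fiber_sum p₀ hp₀pos hsum0 T R hRinj hagree t x₀]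
        _ = (∑' (x : T ⁻¹' {T x₀}), p θ x.val)
            * ((min t ((∑' y, if T x₀ < T y then p₀ y else 0)
                + ∑' y, if T y = T x₀ then p₀ y else 0)
              - min t (∑' y, if T x₀ < T y then p₀ y else 0))
              / ∑' y, if T y = T x₀ then p₀ y else 0) := by
            rw [hfibθ]
            ring
        _ = ∑' (x : T ⁻¹' {T x₀}), p θ x.val *
            ((min t ((∑' y, if T x.val < T y then p₀ y else 0)
                + ∑' y, if T y = T x.val then p₀ y else 0)
              - min t (∑' y, if T x.val < T y then p₀ y else 0))
              / ∑' y, if T y = T x.val then p₀ y else 0) := by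
            rw [← tsum_mul_right]
            refine tsum_congr fun x => ?_
            have hx' : T x.val = T x₀ := x.prop
            rw [hqc x.val hx', hSc x.val hx']
    · haveI : IsEmpty (T ⁻¹' {v} : Set 𝒳) := ⟨fun x => hv ⟨x.val, x.prop⟩⟩
      rw [tsum_empty, tsum_empty]
  -- assemble
  calc ∑' x, p θ x * (volume {u : ℝ | u ∈ Set.Icc (0:ℝ) 1 ∧ PMD x u ≤ t}).toReal
      = ∑' x, p θ x *
          ((min t ((∑' y, if R y < R x then p₀ y else 0) + p₀ x)
            - min t (∑' y, if R y < R x then p₀ y else 0)) / p₀ x) :=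
        tsum_congr fun x => by rw [hPMDmeas x]
    _ = ∑' (v : ℝ), ∑' (x : T ⁻¹' {v}), p θ x.val *
          ((min t ((∑' y, if R y < R x.val then p₀ y else 0) + p₀ x.val)
            - min t (∑' y, if R y < R x.val then p₀ y else 0)) / p₀ x.val) :=
        (hF1sum.hasSum.tsum_fiberwise T).tsum_eq.symm
    _ = ∑' (v : ℝ), ∑' (x : T ⁻¹' {v}), p θ x.val *
          ((min t ((∑' y, if T x.val < T y then p₀ y else 0)
              + ∑' y, if T y = T x.val then p₀ y else 0)
            - min t (∑' y, if T x.val < T y then p₀ y else 0))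
            / ∑' y, if T y = T x.val then p₀ y else 0) := tsum_congr hkey
    _ = ∑' x, p θ x *
          ((min t ((∑' y, if T x < T y then p₀ y else 0)
              + ∑' y, if T y = T x then p₀ y else 0)
            - min t (∑' y, if T x < T y then p₀ y else 0))
            / ∑' y, if T y = T x then p₀ y else 0) :=
        (hF2sum.hasSum.tsum_fiberwise T).tsum_eq
    _ = ∑' x, p θ x * (volume {u : ℝ | u ∈ Set.Icc (0:ℝ) 1 ∧ PT x u ≤ t}).toReal :=
        tsum_congr fun x => by rw [hPTmeas x]
end

section
/- Assume R is injective and agrees with T. Then for every probability mass function p on 𝒳 and every x ∈ 𝒳, Pr_p{R(X) = R(x)} ≤ Pr_p{T(X) = T(x)}; consequently, for every x ∈ 𝒳 the variance over U ~ Uniform[0,1] of the minimally randomized p-value is at most that of the randomized p-value based on T: ∫₀¹ (P^{MD}(x,u) − P^{MD}(x,1/2))² du = (1/12)·Pr₀{R(X) = R(x)}² ≤ (1/12)·Pr₀{T(X) = T(x)}² = ∫₀¹ (P^T(x,u) − P^T(x,1/2))² du. -/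
open MeasureTheory

lemma aux_int (c : ℝ) : (∫ u in (0:ℝ)..1, ((u - 1/2) * c)^2) = (1/12) * c^2 := by
  have h : ∀ u : ℝ, ((u - 1/2) * c)^2 = (u - 1/2)^2 * c^2 := fun u => by ring
  simp_rw [h]
  rw [intervalIntegral.integral_mul_const,
    intervalIntegral.integral_comp_sub_right (fun u => u^2) (1/2), integral_pow]
  norm_num

lemma aux_mono {𝒳 : Type*} (q : 𝒳 → ℝ) (hq : ∀ y, 0 ≤ q y) (hqsum : (∑' y, q y) = 1)
    (T : 𝒳 → ℝ) (R : 𝒳 → ℕ) (hRinj : Function.Injective R) (x : 𝒳) :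
    (∑' y, if R y = R x then q y else 0) ≤ ∑' y, if T y = T x then q y else 0 := by
  have hsq : Summable q := by
    by_contra h
    rw [tsum_eq_zero_of_not_summable h] at hqsum
    norm_num at hqsum
  have hs1 : Summable (fun y => if R y = R x then q y else 0) := by
    apply Summable.of_nonneg_of_le (fun y => ?_) (fun y => ?_) hsq
    · split <;> [exact hq y; exact le_rfl]
    · split <;> [exact le_rfl; exact hq y]
  have hs2 : Summable (fun y => if T y = T x then q y else 0) := by
    apply Summable.of_nonneg_of_le (fun y => ?_) (fun y => ?_) hsq
    · split <;> [exact hq y; exact le_rfl]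
    · split <;> [exact le_rfl; exact hq y]
  refine Summable.tsum_le_tsum ?_ hs1 hs2
  intro b
  by_cases h : R b = R x
  · have hb : b = x := hRinj h
    subst hb
    simp [h]
  · simp only [h, if_false]
    split <;> [exact hq b; exact le_rfl]

/-- If `R` is injective and agrees with `T`, then for every pmf
`p` on `𝒳` and every `x`, `Pr_p{R(X) = R(x)} ≤ Pr_p{T(X) = T(x)}`;
consequently, for every `x` the variance over `U ~ Uniform[0,1]` of the
minimally randomized p-value is at most that of the randomized p-value based
on `T`: `∫₀¹ (P^{MD}(x,u) − P^{MD}(x,1/2))² du = (1/12)·Pr₀{R(X)=R(x)}²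
≤ (1/12)·Pr₀{T(X)=T(x)}² = ∫₀¹ (P^T(x,u) − P^T(x,1/2))² du`. -/
theorem stmt_13 {𝒳 : Type*} [Countable 𝒳]
    (p₀ : 𝒳 → ℝ) (hp₀ : ∀ x, 0 ≤ p₀ x) (hp₀sum : ∑' x, p₀ x = 1)
    (T : 𝒳 → ℝ) (R : 𝒳 → ℕ) (hRinj : Function.Injective R)
    (hagree : ∀ x y, T x > T y → R x < R y)
    (PT PMD : 𝒳 → ℝ → ℝ)
    (hPT : ∀ x u, PT x u = (∑' y, if T x < T y then p₀ y else 0)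
      + u * ∑' y, if T y = T x then p₀ y else 0)
    (hPMD : ∀ x u, PMD x u = (∑' y, if R y < R x then p₀ y else 0)
      + u * ∑' y, if R y = R x then p₀ y else 0) :
    (∀ (q : 𝒳 → ℝ), (∀ y, 0 ≤ q y) → (∑' y, q y) = 1 → ∀ x,
        (∑' y, if R y = R x then q y else 0) ≤ ∑' y, if T y = T x then q y else 0)
      ∧ ∀ x,
        (∫ u in (0:ℝ)..1, (PMD x u - PMD x (1/2))^2)
            = (1/12) * (∑' y, if R y = R x then p₀ y else 0)^2
          ∧ (1/12) * (∑' y, if R y = R x then p₀ y else 0)^2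
            ≤ (1/12) * (∑' y, if T y = T x then p₀ y else 0)^2
          ∧ (1/12) * (∑' y, if T y = T x then p₀ y else 0)^2
            = ∫ u in (0:ℝ)..1, (PT x u - PT x (1/2))^2 := by
  refine ⟨fun q hq hqsum x => aux_mono q hq hqsum T R hRinj x, fun x => ?_⟩
  set c := ∑' y, if R y = R x then p₀ y else 0 with hc
  set d := ∑' y, if T y = T x then p₀ y else 0 with hd
  have hcd : c ≤ d := aux_mono p₀ hp₀ hp₀sum T R hRinj x
  have hc0 : 0 ≤ c := tsum_nonneg (fun y => by split <;> [exact hp₀ y; exact le_rfl])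
  have h1 : ∀ u : ℝ, PMD x u - PMD x (1/2) = (u - 1/2) * c := fun u => by
    rw [hPMD, hPMD]; ring
  have h2 : ∀ u : ℝ, PT x u - PT x (1/2) = (u - 1/2) * d := fun u => by
    rw [hPT, hPT]; ring
  refine ⟨?_, ?_, ?_⟩
  · simp_rw [h1]; exact aux_int c
  · exact mul_le_mul_of_nonneg_left (pow_le_pow_left₀ hc0 hcd 2) (by norm_num)
  · simp_rw [h2]; exact (aux_int d).symm
end

section
/- Let α ∈ [0,1], let φ be a size-α test based on T and let ψ be a minimally discrete size-α test based on R, where R is injective and agrees with T, assume p₀(x) > 0 for every x ∈ 𝒳, and assume T is sufficient for the family. Then for every convex function h : [0,1] → ℝ, Σ_x h(φ(x))p₀(x) ≤ Σ_x h(ψ(x))p₀(x); that is, φ(X) is dominated by ψ(X) in the convex order under the null distribution. -/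
/-- A convex function on `[0,1]` has a supporting line at any interior point. -/
lemma support_line_aux {h : ℝ → ℝ} (hconv : ConvexOn ℝ (Set.Icc (0:ℝ) 1) h)
    {γ : ℝ} (hγ0 : 0 < γ) (hγ1 : γ < 1) :
    ∃ c : ℝ, ∀ t ∈ Set.Icc (0:ℝ) 1, h γ + c * (t - γ) ≤ h t := by
  have hγmem : γ ∈ Set.Icc (0:ℝ) 1 := ⟨hγ0.le, hγ1.le⟩
  set S : Set ℝ := (fun u => (h u - h γ) / (u - γ)) '' Set.Ioc γ 1 with hS
  have hSne : S.Nonempty := ⟨_, ⟨1, ⟨hγ1, le_refl 1⟩, rfl⟩⟩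
  have hbdd : BddBelow S := by
    refine ⟨(h γ - h 0) / (γ - 0), ?_⟩
    rintro s ⟨u, hu, rfl⟩
    exact hconv.slope_mono_adjacent (by simp) ⟨by linarith [hu.1], hu.2⟩ hγ0 hu.1
  refine ⟨sInf S, fun t ht => ?_⟩
  rcases lt_trichotomy t γ with hlt | heq | hgt
  · -- t < γ : slope(t,γ) ≤ sInf S
    have hsl : (h γ - h t) / (γ - t) ≤ sInf S := by
      refine le_csInf hSne ?_
      rintro s ⟨u, hu, rfl⟩
      exact hconv.slope_mono_adjacent ht ⟨by linarith [hu.1], hu.2⟩ hlt hu.1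
    have hpos : 0 < γ - t := by linarith
    have := (div_le_iff₀ hpos).mp hsl
    nlinarith [mul_le_mul_of_nonneg_right hsl hpos.le]
  · simp [heq]
  · -- γ < t : sInf S ≤ slope(γ,t)
    have hsl : sInf S ≤ (h t - h γ) / (t - γ) :=
      csInf_le hbdd ⟨t, ⟨hgt, ht.2⟩, rfl⟩
    have hpos : 0 < t - γ := by linarith
    have := mul_le_mul_of_nonneg_right hsl hpos.le
    rw [div_mul_cancel₀ _ (ne_of_gt hpos)] at this
    linarith

/-- A convex function on `[0,1]` is bounded in absolute value on `[0,1]`. -/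
lemma convex_bdd_aux {h : ℝ → ℝ} (hconv : ConvexOn ℝ (Set.Icc (0:ℝ) 1) h) :
    ∃ C : ℝ, ∀ t ∈ Set.Icc (0:ℝ) 1, |h t| ≤ C := by
  set A : ℝ := max (h 0) (h 1) with hA
  have hup : ∀ t ∈ Set.Icc (0:ℝ) 1, h t ≤ A := by
    intro t ht
    have := hconv.2 (by simp : (0:ℝ) ∈ Set.Icc (0:ℝ) 1) (by simp : (1:ℝ) ∈ Set.Icc (0:ℝ) 1)
      (by linarith [ht.2] : (0:ℝ) ≤ 1 - t) ht.1 (by ring)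
    simp only [smul_eq_mul, mul_zero, mul_one, zero_add] at this
    have h0A : h 0 ≤ A := le_max_left _ _
    have h1A : h 1 ≤ A := le_max_right _ _
    nlinarith [ht.1, ht.2]
  have hlow : ∀ t ∈ Set.Icc (0:ℝ) 1, 2 * h (1/2) - A ≤ h t := by
    intro t ht
    have h1t : 1 - t ∈ Set.Icc (0:ℝ) 1 := ⟨by linarith [ht.2], by linarith [ht.1]⟩
    have := hconv.2 ht h1t (by norm_num : (0:ℝ) ≤ 1/2) (by norm_num : (0:ℝ) ≤ 1/2)
      (by norm_num)
    simp only [smul_eq_mul] at this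
    have hmid : (1/2 : ℝ) * t + 1/2 * (1 - t) = 1/2 := by ring
    rw [hmid] at this
    have := hup (1 - t) h1t
    linarith
  refine ⟨|A| + |2 * h (1/2) - A|, fun t ht => abs_le.mpr ⟨?_, ?_⟩⟩
  · have h1 := hlow t ht
    have h2 := neg_abs_le (2 * h (1/2) - A)
    have h3 := abs_nonneg A
    linarith
  · have h1 := hup t ht
    have h2 := le_abs_self A
    have h3 := abs_nonneg (2 * h (1/2) - A)
    linarith

/-- If `φ` is a size-α test based on `T`, `ψ` an MD size-α test
based on `R` (injective, agreeing with `T`), `p₀ > 0` everywhere, and `T` is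
sufficient for the family, then for every convex `h : [0,1] → ℝ`,
`Σ_x h(φ(x))p₀(x) ≤ Σ_x h(ψ(x))p₀(x)`: `φ(X)` is dominated by `ψ(X)` in the
convex order under the null. -/
theorem stmt_14 {𝒳 : Type*} [Countable 𝒳] {Θ : Type*}
    (p : Θ → 𝒳 → ℝ) (hp : ∀ θ x, 0 ≤ p θ x) (hpsum : ∀ θ, ∑' x, p θ x = 1)
    (θ₀ : Θ) (p₀ : 𝒳 → ℝ) (hnull : p θ₀ = p₀)
    (hp₀pos : ∀ x, 0 < p₀ x)
    (T : 𝒳 → ℝ) (R : 𝒳 → ℕ) (hRinj : Function.Injective R)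
    (hagree : ∀ x y, T x > T y → R x < R y)
    (hsuff : ∀ (θ : Θ) (x : 𝒳),
      p θ x * (∑' y, if T y = T x then p₀ y else 0)
        = p₀ x * ∑' y, if T y = T x then p θ y else 0)
    (α : ℝ) (hα : α ∈ Set.Icc (0:ℝ) 1)
    (φ : 𝒳 → ℝ) (hφ01 : ∀ x, φ x ∈ Set.Icc (0:ℝ) 1)
    (k : ℝ) (γ : ℝ) (hγ : γ ∈ Set.Icc (0:ℝ) 1)
    (hφ1 : ∀ x, T x > k → φ x = 1) (hφ2 : ∀ x, T x = k → φ x = γ)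
    (hφ3 : ∀ x, T x < k → φ x = 0) (hφα : ∑' x, φ x * p₀ x = α)
    (ψ : 𝒳 → ℝ) (hψ01 : ∀ x, ψ x ∈ Set.Icc (0:ℝ) 1)
    (kstar : ℕ) (γstar : ℝ) (hγstar : γstar ∈ Set.Icc (0:ℝ) 1)
    (hψ1 : ∀ x, R x < kstar → ψ x = 1) (hψ2 : ∀ x, R x = kstar → ψ x = γstar)
    (hψ3 : ∀ x, R x > kstar → ψ x = 0) (hψα : ∑' x, ψ x * p₀ x = α) :
    ∀ h : ℝ → ℝ, ConvexOn ℝ (Set.Icc (0:ℝ) 1) h →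
      ∑' x, h (φ x) * p₀ x ≤ ∑' x, h (ψ x) * p₀ x := by
  intro h hconv
  -- basic summability facts
  have hp0sum : Summable p₀ := by
    by_contra hns
    have := hpsum θ₀
    rw [hnull] at this
    rw [tsum_eq_zero_of_not_summable hns] at this
    norm_num at this
  have hφsum : Summable (fun x => φ x * p₀ x) :=
    Summable.of_nonneg_of_le
      (fun x => mul_nonneg (hφ01 x).1 (hp₀pos x).le)
      (fun x => by nlinarith [(hφ01 x).2, (hp₀pos x).le]) hp0sum
  have hψsum : Summable (fun x => ψ x * p₀ x) :=
    Summable.of_nonneg_of_le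
      (fun x => mul_nonneg (hψ01 x).1 (hp₀pos x).le)
      (fun x => by nlinarith [(hψ01 x).2, (hp₀pos x).le]) hp0sum
  obtain ⟨C, hC⟩ := convex_bdd_aux hconv
  have habs : ∀ (f : 𝒳 → ℝ), (∀ x, f x ∈ Set.Icc (0:ℝ) 1) →
      Summable (fun x => h (f x) * p₀ x) := by
    intro f hf
    apply Summable.of_abs
    apply Summable.of_nonneg_of_le (fun x => abs_nonneg _)
      (fun x => ?_) (hp0sum.mul_left C)
    rw [abs_mul, abs_of_nonneg (hp₀pos x).le]
    exact mul_le_mul_of_nonneg_right (hC _ (hf x)) (hp₀pos x).le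
  have hhφsum : Summable (fun x => h (φ x) * p₀ x) := habs φ hφ01
  have hhψsum : Summable (fun x => h (ψ x) * p₀ x) := habs ψ hψ01
  -- Step 1: ψ = 1 above k and ψ = 0 below k
  have hψtop : ∀ x, k < T x → ψ x = 1 := by
    intro x hx
    by_contra hne
    have h1 : ψ x < 1 := lt_of_le_of_ne (hψ01 x).2 hne
    have hr : kstar ≤ R x := by
      by_contra h'
      exact hne (hψ1 x (lt_of_not_ge h'))
    have hz : ∀ y, T y ≤ k → ψ y = 0 := fun y hy =>
      hψ3 y (lt_of_le_of_lt hr (hagree x y (lt_of_le_of_lt hy hx)))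
    have hle : ∀ y, ψ y * p₀ y ≤ φ y * p₀ y := by
      intro y
      rcases le_or_gt (T y) k with hy | hy
      · rw [hz y hy, zero_mul]
        exact mul_nonneg (hφ01 y).1 (hp₀pos y).le
      · rw [hφ1 y hy, one_mul]
        nlinarith [(hψ01 y).2, (hp₀pos y).le]
    have hstrict : ψ x * p₀ x < φ x * p₀ x := by
      rw [hφ1 x hx, one_mul]
      nlinarith [hp₀pos x]
    have := Summable.tsum_lt_tsum hle hstrict hψsum hφsum
    rw [hψα, hφα] at this
    exact lt_irrefl α this
  have hψbot : ∀ x, T x < k → ψ x = 0 := by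
    intro x hx
    by_contra hne
    have h1 : 0 < ψ x := lt_of_le_of_ne (hψ01 x).1 (Ne.symm hne)
    have hr : R x ≤ kstar := by
      by_contra h'
      exact hne (hψ3 x (lt_of_not_ge h'))
    have ho : ∀ y, k ≤ T y → ψ y = 1 := fun y hy =>
      hψ1 y (lt_of_lt_of_le (hagree y x (lt_of_lt_of_le hx hy)) hr)
    have hle : ∀ y, φ y * p₀ y ≤ ψ y * p₀ y := by
      intro y
      rcases le_or_gt k (T y) with hy | hy
      · rw [ho y hy, one_mul]
        nlinarith [(hφ01 y).2, (hp₀pos y).le]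
      · rw [hφ3 y hy, zero_mul]
        exact mul_nonneg (hψ01 y).1 (hp₀pos y).le
    have hstrict : φ x * p₀ x < ψ x * p₀ x := by
      rw [hφ3 x hx, zero_mul]
      exact mul_pos h1 (hp₀pos x)
    have := Summable.tsum_lt_tsum hle hstrict hφsum hψsum
    rw [hψα, hφα] at this
    exact lt_irrefl α this
  -- boundary cases: γ = 0 or γ = 1 force ψ = φ
  rcases eq_or_lt_of_le hγ.1 with hγ0 | hγ0
  · -- γ = 0
    have hψφ : ∀ x, ψ x = φ x := by
      have hle : ∀ y, φ y * p₀ y ≤ ψ y * p₀ y := by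
        intro y
        rcases lt_trichotomy (T y) k with hy | hy | hy
        · rw [hφ3 y hy, zero_mul]
          exact mul_nonneg (hψ01 y).1 (hp₀pos y).le
        · rw [hφ2 y hy, ← hγ0, zero_mul]
          exact mul_nonneg (hψ01 y).1 (hp₀pos y).le
        · rw [hφ1 y hy, hψtop y hy]
      intro x
      by_contra hne
      have hla : φ x ≤ ψ x := (mul_le_mul_iff_of_pos_right (hp₀pos x)).mp (hle x)
      have hlt : φ x < ψ x := lt_of_le_of_ne hla fun e => hne e.symm
      have hstrict : φ x * p₀ x < ψ x * p₀ x :=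
        mul_lt_mul_of_pos_right hlt (hp₀pos x)
      have := Summable.tsum_lt_tsum hle hstrict hφsum hψsum
      rw [hψα, hφα] at this
      exact absurd this (lt_irrefl α)
    exact le_of_eq (tsum_congr fun x => by rw [hψφ x])
  rcases eq_or_lt_of_le hγ.2 with hγ1 | hγ1
  · -- γ = 1
    have hψφ : ∀ x, ψ x = φ x := by
      have hle : ∀ y, ψ y * p₀ y ≤ φ y * p₀ y := by
        intro y
        rcases lt_trichotomy (T y) k with hy | hy | hy
        · rw [hφ3 y hy, hψbot y hy]
        · rw [hφ2 y hy, hγ1, one_mul]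
          nlinarith [(hψ01 y).2, (hp₀pos y).le]
        · rw [hφ1 y hy, hψtop y hy]
      intro x
      by_contra hne
      have hla : ψ x ≤ φ x := (mul_le_mul_iff_of_pos_right (hp₀pos x)).mp (hle x)
      have hlt : ψ x < φ x := lt_of_le_of_ne hla hne
      have hstrict : ψ x * p₀ x < φ x * p₀ x :=
        mul_lt_mul_of_pos_right hlt (hp₀pos x)
      have := Summable.tsum_lt_tsum hle hstrict hψsum hφsum
      rw [hψα, hφα] at this
      exact absurd this (lt_irrefl α)
    exact le_of_eq (tsum_congr fun x => by rw [hψφ x])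
  -- main case: 0 < γ < 1, use a supporting line at γ
  obtain ⟨c, hc⟩ := support_line_aux hconv hγ0 hγ1
  have key : ∀ x, h (φ x) * p₀ x
      ≤ h (ψ x) * p₀ x - c * (ψ x * p₀ x) + c * (φ x * p₀ x) := by
    intro x
    rcases lt_trichotomy (T x) k with hx | hx | hx
    · rw [hφ3 x hx, hψbot x hx]; nlinarith [hp₀pos x]
    · rw [hφ2 x hx]
      have := hc (ψ x) (hψ01 x)
      nlinarith [mul_le_mul_of_nonneg_right this (hp₀pos x).le]
    · rw [hφ1 x hx, hψtop x hx]; nlinarith [hp₀pos x]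
  have hrhs : Summable (fun x => h (ψ x) * p₀ x - c * (ψ x * p₀ x)
      + c * (φ x * p₀ x)) :=
    (hhψsum.sub (hψsum.mul_left c)).add (hφsum.mul_left c)
  calc ∑' x, h (φ x) * p₀ x
      ≤ ∑' x, (h (ψ x) * p₀ x - c * (ψ x * p₀ x) + c * (φ x * p₀ x)) :=
        Summable.tsum_le_tsum key hhφsum hrhs
    _ = (∑' x, h (ψ x) * p₀ x) - c * α + c * α := by
        rw [Summable.tsum_add (hhψsum.sub (hψsum.mul_left c)) (hφsum.mul_left c),
          Summable.tsum_sub hhψsum (hψsum.mul_left c), tsum_mul_left, tsum_mul_left,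
          hψα, hφα]
    _ = ∑' x, h (ψ x) * p₀ x := by ring
end

section
/- Assume R is injective and agrees with T, p₀(x) > 0 for every x ∈ 𝒳, and T is sufficient for the family. Then for every convex function h : [0,1] → ℝ, Σ_x h(Q^T(x))p₀(x) ≤ Σ_x h(Q^{MD}(x))p₀(x) ≤ ∫₀¹ h(u) du; that is, under the null distribution the mid-p-value based on T is dominated in the convex order by the MD mid-p-value, which in turn is dominated in the convex order by a uniform random variable. -/
open MeasureTheory

/-- An explicit subgradient of a function at a point: sup of left secant slopes. -/
noncomputable def subgrad (h : ℝ → ℝ) (m : ℝ) : ℝ :=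
  sSup ((fun v => (h m - h v) / (m - v)) '' Set.Ico 0 m)

lemma subgrad_spec {h : ℝ → ℝ} (hc : ConvexOn ℝ (Set.Icc (0:ℝ) 1) h) {m : ℝ}
    (hm0 : 0 < m) (hm1 : m < 1) :
    (h m - h 0) / m ≤ subgrad h m ∧ subgrad h m ≤ (h 1 - h m) / (1 - m) ∧
      ∀ v ∈ Set.Icc (0:ℝ) 1, h m + subgrad h m * (v - m) ≤ h v := by
  set A := (fun v => (h m - h v) / (m - v)) '' Set.Ico 0 m with hA
  have hsg : subgrad h m = sSup A := rfl
  have hmI : m ∈ Set.Icc (0:ℝ) 1 := ⟨hm0.le, hm1.le⟩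
  have hne : A.Nonempty := ⟨_, ⟨0, ⟨le_refl 0, hm0⟩, rfl⟩⟩
  have hub : ∀ z ∈ A, z ≤ (h 1 - h m) / (1 - m) := by
    rintro z ⟨v, hv, rfl⟩
    exact hc.slope_mono_adjacent ⟨hv.1, (hv.2.trans hm1).le⟩ ⟨by norm_num, le_refl 1⟩
      hv.2 hm1
  have hbdd : BddAbove A := ⟨_, hub⟩
  have h1 : (h m - h 0) / m ≤ subgrad h m := by
    have : (h m - h 0) / (m - 0) ∈ A := ⟨0, ⟨le_refl 0, hm0⟩, rfl⟩
    simpa [hsg] using le_csSup hbdd this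
  have h2 : subgrad h m ≤ (h 1 - h m) / (1 - m) := csSup_le hne hub
  refine ⟨h1, h2, fun v hv => ?_⟩
  rcases lt_trichotomy v m with hlt | heq | hgt
  · have hmem : (h m - h v) / (m - v) ∈ A := ⟨v, ⟨hv.1, hlt⟩, rfl⟩
    have := le_csSup hbdd hmem
    have hpos : 0 < m - v := by linarith
    rw [div_le_iff₀ hpos] at this
    rw [hsg]
    nlinarith
  · simp [heq]
  · have hle : subgrad h m ≤ (h v - h m) / (v - m) := by
      apply csSup_le hne
      rintro z ⟨w, hw, rfl⟩
      exact hc.slope_mono_adjacent ⟨hw.1, (hw.2.trans hm1).le⟩ hv hw.2 hgt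
    have hpos : 0 < v - m := by linarith
    rw [hsg, le_div_iff₀ hpos] at hle
    nlinarith

lemma convex_bdd {h : ℝ → ℝ} (hc : ConvexOn ℝ (Set.Icc (0:ℝ) 1) h) :
    ∀ v ∈ Set.Icc (0:ℝ) 1, |h v| ≤ |h 0| + |h 1| + 2 * |h (1/2)| := by
  have h0 : (0:ℝ) ∈ Set.Icc (0:ℝ) 1 := by norm_num
  have h1 : (1:ℝ) ∈ Set.Icc (0:ℝ) 1 := by norm_num
  have hup : ∀ v ∈ Set.Icc (0:ℝ) 1, h v ≤ |h 0| + |h 1| := by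
    intro v hv
    have key := hc.2 h0 h1 (by linarith [hv.1, hv.2] : (0:ℝ) ≤ 1 - v) hv.1 (by ring)
    simp only [smul_eq_mul, mul_zero, mul_one, zero_add] at key
    have := abs_nonneg (h 0); have := abs_nonneg (h 1)
    have := le_abs_self (h 0); have := le_abs_self (h 1)
    nlinarith [hv.1, hv.2]
  intro v hv
  have hv' : 1 - v ∈ Set.Icc (0:ℝ) 1 := ⟨by linarith [hv.2], by linarith [hv.1]⟩
  have key := hc.2 hv hv' (by norm_num : (0:ℝ) ≤ 1/2) (by norm_num : (0:ℝ) ≤ 1/2) (by norm_num)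
  have heq : (1/2 : ℝ) • v + (1/2 : ℝ) • (1 - v) = 1/2 := by simp; ring
  rw [heq] at key
  simp only [smul_eq_mul] at key
  have hu := hup v hv
  have hu' := hup (1 - v) hv'
  have := neg_abs_le (h (1/2))
  rw [abs_le]
  constructor <;> nlinarith [abs_nonneg (h 0), abs_nonneg (h 1), abs_nonneg (h (1/2))]

set_option maxHeartbeats 1000000 in
/-- If `R` is injective and agrees with `T`, `p₀ > 0` everywhere,
and `T` is sufficient for the family, then for every convex `h : [0,1] → ℝ`,
`Σ_x h(Q^T(x))p₀(x) ≤ Σ_x h(Q^{MD}(x))p₀(x) ≤ ∫₀¹ h(u) du`: under the null the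
mid-p-value based on `T` is dominated in the convex order by the MD
mid-p-value, which in turn is dominated in the convex order by a uniform
random variable. -/
theorem stmt_15 {𝒳 : Type*} [Countable 𝒳] {Θ : Type*}
    (p : Θ → 𝒳 → ℝ) (hp : ∀ θ x, 0 ≤ p θ x) (hpsum : ∀ θ, ∑' x, p θ x = 1)
    (θ₀ : Θ) (p₀ : 𝒳 → ℝ) (hnull : p θ₀ = p₀)
    (hp₀pos : ∀ x, 0 < p₀ x)
    (T : 𝒳 → ℝ) (R : 𝒳 → ℕ) (hRinj : Function.Injective R)
    (hagree : ∀ x y, T x > T y → R x < R y)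
    (hsuff : ∀ (θ : Θ) (x : 𝒳),
      p θ x * (∑' y, if T y = T x then p₀ y else 0)
        = p₀ x * ∑' y, if T y = T x then p θ y else 0)
    (QT QMD : 𝒳 → ℝ)
    (hQT : ∀ x, QT x = (∑' y, if T x < T y then p₀ y else 0)
      + (1/2) * ∑' y, if T y = T x then p₀ y else 0)
    (hQMD : ∀ x, QMD x = (∑' y, if R y < R x then p₀ y else 0)
      + (1/2) * ∑' y, if R y = R x then p₀ y else 0) :
    ∀ h : ℝ → ℝ, ConvexOn ℝ (Set.Icc (0:ℝ) 1) h →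
      (∑' x, h (QT x) * p₀ x ≤ ∑' x, h (QMD x) * p₀ x)
        ∧ ∑' x, h (QMD x) * p₀ x ≤ ∫ u in (0:ℝ)..1, h u := by
  classical
  intro h hconv
  -- basic facts about p₀
  have hp0 : ∀ x, 0 ≤ p₀ x := fun x => (hp₀pos x).le
  have htot : ∑' x, p₀ x = 1 := by rw [← hnull]; exact hpsum θ₀
  have hsum₀ : Summable p₀ := by
    by_contra hns
    rw [tsum_eq_zero_of_not_summable hns] at htot
    norm_num at htot
  -- generic facts about truncated sums
  have hifnn : ∀ (P : 𝒳 → Prop) [DecidablePred P] (y : 𝒳),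
      0 ≤ if P y then p₀ y else 0 := by
    intro P _ y; split <;> simp [hp0 y]
  have hifle : ∀ (P : 𝒳 → Prop) [DecidablePred P] (y : 𝒳),
      (if P y then p₀ y else 0) ≤ p₀ y := by
    intro P _ y; split <;> simp [hp0 y]
  have hsumP : ∀ (P : 𝒳 → Prop) [DecidablePred P],
      Summable (fun y => if P y then p₀ y else 0) := by
    intro P _
    exact Summable.of_nonneg_of_le (hifnn P) (hifle P) hsum₀
  have hnnP : ∀ (P : 𝒳 → Prop) [DecidablePred P],
      0 ≤ ∑' y, if P y then p₀ y else 0 := by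
    intro P _; exact tsum_nonneg (hifnn P)
  have hle1P : ∀ (P : 𝒳 → Prop) [DecidablePred P],
      (∑' y, if P y then p₀ y else 0) ≤ 1 := by
    intro P _
    rw [← htot]
    exact Summable.tsum_le_tsum (hifle P) (hsumP P) hsum₀
  have hmonoP : ∀ (P Q : 𝒳 → Prop) [DecidablePred P] [DecidablePred Q], (∀ y, P y → Q y) →
      (∑' y, if P y then p₀ y else 0) ≤ ∑' y, if Q y then p₀ y else 0 := by
    intro P Q _ _ hPQ
    refine Summable.tsum_le_tsum (fun y => ?_) (hsumP P) (hsumP Q)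
    by_cases hy : P y
    · simp [hy, hPQ y hy]
    · simp only [if_neg hy]; exact hifnn Q y
  have hcongrP : ∀ (P Q : 𝒳 → Prop) [DecidablePred P] [DecidablePred Q], (∀ y, P y ↔ Q y) →
      (∑' y, if P y then p₀ y else 0) = ∑' y, if Q y then p₀ y else 0 := by
    intro P Q _ _ hPQ
    refine tsum_congr (fun y => ?_)
    by_cases hy : P y
    · simp [hy, (hPQ y).1 hy]
    · rw [if_neg hy, if_neg (fun hq => hy ((hPQ y).2 hq))]
  have haddP : ∀ (P Q : 𝒳 → Prop) [DecidablePred P] [DecidablePred Q],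
      (∀ y, P y → Q y → False) →
      (∑' y, if P y ∨ Q y then p₀ y else 0)
        = (∑' y, if P y then p₀ y else 0) + ∑' y, if Q y then p₀ y else 0 := by
    intro P Q _ _ hPQ
    rw [← Summable.tsum_add (hsumP P) (hsumP Q)]
    refine tsum_congr (fun y => ?_)
    by_cases h1 : P y <;> by_cases h2 : Q y
    · exact absurd (hPQ y h1 h2) not_false
    · simp [h1, h2]
    · simp [h1, h2]
    · simp [h1, h2]
  have hsingle : ∀ x : 𝒳, (∑' y, if y = x then p₀ y else 0) = p₀ x := by
    intro x
    rw [tsum_eq_single x (fun y hy => if_neg hy)]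
    simp
  -- names for the relevant truncated sums
  set A : 𝒳 → ℝ := fun x => ∑' y, if T x < T y then p₀ y else 0 with hA
  set Tt : 𝒳 → ℝ := fun x => ∑' y, if T y = T x then p₀ y else 0 with hTt
  set C : 𝒳 → ℝ := fun x => ∑' y, if R y < R x then p₀ y else 0 with hC
  set U : 𝒳 → ℝ := fun x => ∑' y, if T y = T x ∧ R y < R x then p₀ y else 0 with hU
  set V : 𝒳 → ℝ := fun x => ∑' y, if T y = T x ∧ R x < R y then p₀ y else 0 with hV
  have hQT' : ∀ x, QT x = A x + Tt x / 2 := by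
    intro x; rw [hQT x]; simp only [hA, hTt]; ring
  have hQMD' : ∀ x, QMD x = C x + p₀ x / 2 := by
    intro x; rw [hQMD x]
    have : (∑' y, if R y = R x then p₀ y else 0) = p₀ x := by
      rw [← hsingle x]
      exact hcongrP _ _ (fun y => ⟨fun hr => hRinj hr, fun hxy => by rw [hxy]⟩)
    rw [this]; simp only [hC]; ring
  -- structural decompositions
  have hCdecomp : ∀ x, C x = A x + U x := by
    intro x
    simp only [hC, hA, hU]
    rw [← haddP _ _ (fun y h1 h2 => absurd h2.1 (ne_of_gt h1))]
    refine hcongrP _ _ (fun y => ?_)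
    constructor
    · intro hr
      rcases lt_trichotomy (T x) (T y) with ht | ht | ht
      · exact Or.inl ht
      · exact Or.inr ⟨ht.symm, hr⟩
      · exact absurd (hagree x y ht) (by omega)
    · rintro (ht | ⟨_, hr⟩)
      · exact hagree y x ht
      · exact hr
  have hTdecomp : ∀ x, Tt x = U x + p₀ x + V x := by
    intro x
    simp only [hTt, hU, hV]
    have e1 : (∑' y, if T y = T x then p₀ y else 0)
        = ∑' y, if (T y = T x ∧ R y < R x) ∨ (y = x ∨ (T y = T x ∧ R x < R y))
            then p₀ y else 0 := by
      refine hcongrP _ _ (fun y => ⟨fun hT => ?_, ?_⟩)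
      · rcases lt_trichotomy (R y) (R x) with hr | hr | hr
        · exact Or.inl ⟨hT, hr⟩
        · exact Or.inr (Or.inl (hRinj hr))
        · exact Or.inr (Or.inr ⟨hT, hr⟩)
      · rintro (⟨hT, _⟩ | hyx | ⟨hT, _⟩)
        · exact hT
        · rw [hyx]
        · exact hT
    rw [e1, haddP _ _ (fun y h1 h2 => by
        rcases h2 with h2 | h2
        · subst h2; exact lt_irrefl _ h1.2
        · exact lt_asymm h1.2 h2.2),
      haddP (fun y => y = x) _ (fun y h1 h2 => by subst h1; exact lt_irrefl _ h2.2),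
      hsingle, add_assoc]
  -- nonnegativity facts
  have hAnn : ∀ x, 0 ≤ A x := fun x => by simp only [hA]; exact hnnP _
  have hCnn : ∀ x, 0 ≤ C x := fun x => by simp only [hC]; exact hnnP _
  have hUnn : ∀ x, 0 ≤ U x := fun x => by simp only [hU]; exact hnnP _
  have hVnn : ∀ x, 0 ≤ V x := fun x => by simp only [hV]; exact hnnP _
  have hTtle : ∀ x, p₀ x ≤ Tt x := fun x => by
    have := hTdecomp x; have := hUnn x; have := hVnn x; linarith
  have hTtpos : ∀ x, 0 < Tt x := fun x => lt_of_lt_of_le (hp₀pos x) (hTtle x)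
  have hUleTt : ∀ x, U x ≤ Tt x := fun x => by
    have := hTdecomp x; have := hVnn x; have := hp0 x; linarith
  have hVleTt : ∀ x, V x ≤ Tt x := fun x => by
    have := hTdecomp x; have := hUnn x; have := hp0 x; linarith
  have hATt : ∀ x, A x + Tt x ≤ 1 := by
    intro x
    simp only [hA, hTt]
    rw [← haddP _ _ (fun y h1 h2 => absurd h2 (ne_of_gt h1))]
    exact hle1P _
  have hCp : ∀ x, C x + p₀ x ≤ 1 := by
    intro x
    simp only [hC]
    rw [← hsingle x, ← haddP _ _ (fun y h1 h2 => by subst h2; exact lt_irrefl _ h1)]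
    exact hle1P _
  -- location of QT, QMD
  have hQT0 : ∀ x, 0 < QT x := fun x => by
    have := hQT' x; have := hAnn x; have := hTtpos x; linarith
  have hQT1 : ∀ x, QT x < 1 := fun x => by
    have := hQT' x; have := hATt x; have := hTtpos x; linarith
  have hQMD0 : ∀ x, 0 < QMD x := fun x => by
    have := hQMD' x; have := hCnn x; have := hp₀pos x; linarith
  have hQMD1 : ∀ x, QMD x < 1 := fun x => by
    have := hQMD' x; have := hCp x; have := hp₀pos x; linarith
  -- the global bound M
  set M : ℝ := |h 0| + |h 1| + 2 * |h (1/2)| with hMdef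
  have hM : ∀ v ∈ Set.Icc (0:ℝ) 1, |h v| ≤ M := convex_bdd hconv
  have hMnn : 0 ≤ M := by positivity
  -- the subgradient function
  set σ : 𝒳 → ℝ := fun x => subgrad h (QT x) with hσ
  have hσspec : ∀ x, (h (QT x) - h 0) / QT x ≤ σ x ∧
      σ x ≤ (h 1 - h (QT x)) / (1 - QT x) ∧
      ∀ v ∈ Set.Icc (0:ℝ) 1, h (QT x) + σ x * (v - QT x) ≤ h v :=
    fun x => subgrad_spec hconv (hQT0 x) (hQT1 x)
  have hσbnd : ∀ x, |σ x| * Tt x ≤ 4 * M := by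
    intro x
    obtain ⟨hl, hr, _⟩ := hσspec x
    have h0M := hM 0 (by norm_num)
    have h1M := hM 1 (by norm_num)
    have hmM := hM (QT x) ⟨(hQT0 x).le, (hQT1 x).le⟩
    have hTt2m : Tt x ≤ 2 * QT x := by
      have := hQT' x; have := hAnn x; linarith
    have hTt2m' : Tt x ≤ 2 * (1 - QT x) := by
      have := hQT' x; have := hATt x; linarith
    have hm0 := hQT0 x; have hm1 := hQT1 x
    have hr' : σ x * (1 - QT x) ≤ h 1 - h (QT x) :=
      (le_div_iff₀ (by linarith)).1 hr
    have hl' : h (QT x) - h 0 ≤ σ x * QT x := (div_le_iff₀ hm0).1 hl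
    have habs0 := abs_le.1 h0M
    have habs1 := abs_le.1 h1M
    have habsm := abs_le.1 hmM
    have hTtp := hTtpos x
    rcases abs_cases (σ x) with ⟨he, hsgn⟩ | ⟨he, hsgn⟩ <;> rw [he]
    · nlinarith
    · nlinarith
  -- QT depends on x only through T x, hence so does σ
  have hQTconst : ∀ x y, T x = T y → QT x = QT y := by
    intro x y hT
    rw [hQT' x, hQT' y]
    have hAe : A x = A y := by
      simp only [hA]; exact hcongrP _ _ (fun z => by rw [hT])
    have hTe : Tt x = Tt y := by
      simp only [hTt]; exact hcongrP _ _ (fun z => by rw [hT])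
    rw [hAe, hTe]
  have hσconst : ∀ x y, T x = T y → σ x = σ y := fun x y hT => by
    simp only [hσ]; rw [hQTconst x y hT]
  -- the symmetrization kernel
  set F : 𝒳 × 𝒳 → ℝ :=
    fun q => if T q.2 = T q.1 ∧ R q.2 < R q.1 then σ q.1 * (p₀ q.1 * p₀ q.2) else 0 with hF
  have hFxy : ∀ x y, F (x, y)
      = (σ x * p₀ x) * (if T y = T x ∧ R y < R x then p₀ y else 0) := by
    intro x y
    simp only [hF]
    by_cases hcnd : T y = T x ∧ R y < R x
    · rw [if_pos hcnd, if_pos hcnd]; ring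
    · rw [if_neg hcnd, if_neg hcnd, mul_zero]
  have hFyx : ∀ x y, F (y, x)
      = (σ x * p₀ x) * (if T y = T x ∧ R x < R y then p₀ y else 0) := by
    intro x y
    simp only [hF]
    by_cases hcnd : T y = T x ∧ R x < R y
    · rw [if_pos (show T x = T y ∧ R x < R y from ⟨hcnd.1.symm, hcnd.2⟩), if_pos hcnd,
        hσconst y x hcnd.1]
      ring
    · rw [if_neg (fun hc' => hcnd ⟨hc'.1.symm, hc'.2⟩), if_neg hcnd, mul_zero]
  have hrow : ∀ x, Summable fun y => F (x, y) := fun x => by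
    simp only [hFxy]; exact (hsumP _).mul_left _
  have hcol : ∀ y, Summable fun x => F (x, y) := fun y => by
    simp only [fun x => hFyx y x]; exact (hsumP _).mul_left _
  have hrowsum : ∀ x, ∑' y, F (x, y) = σ x * p₀ x * U x := fun x => by
    simp only [hFxy]; rw [tsum_mul_left]
  have hcolsum : ∀ x, ∑' y, F (y, x) = σ x * p₀ x * V x := fun x => by
    simp only [fun y => hFyx x y]; rw [tsum_mul_left]
  have habsrow : ∀ x, ∑' y, |F (x, y)| = |σ x| * p₀ x * U x := by
    intro x
    have heqy : ∀ y, |F (x, y)|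
        = (|σ x| * p₀ x) * (if T y = T x ∧ R y < R x then p₀ y else 0) := by
      intro y
      by_cases hcnd : T y = T x ∧ R y < R x
      · rw [hFxy, if_pos hcnd, abs_mul, abs_mul,
          abs_of_nonneg (hp0 x), abs_of_nonneg (hp0 y)]
      · rw [hFxy, if_neg hcnd, mul_zero, mul_zero, abs_zero]
    simp only [heqy]; rw [tsum_mul_left]
  have hrowbnd : ∀ x, |σ x| * p₀ x * U x ≤ 4 * M * p₀ x := by
    intro x
    have h1 : |σ x| * U x ≤ |σ x| * Tt x :=
      mul_le_mul_of_nonneg_left (hUleTt x) (abs_nonneg _)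
    have h2 := hσbnd x
    nlinarith [hp0 x, abs_nonneg (σ x), hUnn x]
  have habsF : Summable fun q : 𝒳 × 𝒳 => |F q| := by
    refine (summable_prod_of_nonneg (fun q => abs_nonneg _)).2 ⟨fun x => (hrow x).abs, ?_⟩
    refine Summable.of_nonneg_of_le (fun x => tsum_nonneg (fun y => abs_nonneg _))
      (fun x => ?_) (hsum₀.mul_left (4 * M))
    rw [habsrow x]
    exact hrowbnd x
  have hFsum : Summable F := habsF.of_abs
  have hUVsum : ∑' x, σ x * p₀ x * U x = ∑' x, σ x * p₀ x * V x := by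
    calc ∑' x, σ x * p₀ x * U x = ∑' x, ∑' y, F (x, y) :=
          (tsum_congr hrowsum).symm
      _ = ∑' y, ∑' x, F (x, y) := (Summable.tsum_comm' (f := fun x y => F (x, y)) hFsum hrow hcol).symm
      _ = ∑' x, σ x * p₀ x * V x := tsum_congr hcolsum
  have hsU : Summable fun x => σ x * p₀ x * U x := by
    refine (summable_abs_iff.1 ?_)
    refine Summable.of_nonneg_of_le (fun x => abs_nonneg _) (fun x => ?_)
      (hsum₀.mul_left (4 * M))
    rw [abs_mul, abs_mul, abs_of_nonneg (hp0 x), abs_of_nonneg (hUnn x)]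
    exact hrowbnd x
  have hsV : Summable fun x => σ x * p₀ x * V x := by
    refine (summable_abs_iff.1 ?_)
    refine Summable.of_nonneg_of_le (fun x => abs_nonneg _) (fun x => ?_)
      (hsum₀.mul_left (4 * M))
    rw [abs_mul, abs_mul, abs_of_nonneg (hp0 x), abs_of_nonneg (hVnn x)]
    have h1 : |σ x| * V x ≤ |σ x| * Tt x :=
      mul_le_mul_of_nonneg_left (hVleTt x) (abs_nonneg _)
    have h2 := hσbnd x
    nlinarith [hp0 x, abs_nonneg (σ x), hVnn x]
  have hD : ∀ x, QMD x - QT x = (U x - V x) / 2 := by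
    intro x
    rw [hQMD' x, hQT' x, hCdecomp x, hTdecomp x]; ring
  have hzero : ∑' x, (σ x * p₀ x) * (QMD x - QT x) = 0 := by
    have heq : (fun x => (σ x * p₀ x) * (QMD x - QT x))
        = fun x => (σ x * p₀ x * U x - σ x * p₀ x * V x) / 2 :=
      funext fun x => by rw [hD x]; ring
    rw [heq, tsum_div_const, Summable.tsum_sub hsU hsV, hUVsum, sub_self, zero_div]
  have hsum3 : Summable fun x => (σ x * p₀ x) * (QMD x - QT x) := by
    have heq : (fun x => (σ x * p₀ x) * (QMD x - QT x))
        = fun x => (σ x * p₀ x * U x - σ x * p₀ x * V x) / 2 :=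
      funext fun x => by rw [hD x]; ring
    rw [heq]
    exact (hsU.sub hsV).div_const 2
  have hsumQT : Summable fun x => h (QT x) * p₀ x := by
    refine summable_abs_iff.1 (Summable.of_nonneg_of_le (fun x => abs_nonneg _)
      (fun x => ?_) (hsum₀.mul_left M))
    rw [abs_mul, abs_of_nonneg (hp0 x)]
    exact mul_le_mul_of_nonneg_right (hM _ ⟨(hQT0 x).le, (hQT1 x).le⟩) (hp0 x)
  have hsumQMD : Summable fun x => h (QMD x) * p₀ x := by
    refine summable_abs_iff.1 (Summable.of_nonneg_of_le (fun x => abs_nonneg _)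
      (fun x => ?_) (hsum₀.mul_left M))
    rw [abs_mul, abs_of_nonneg (hp0 x)]
    exact mul_le_mul_of_nonneg_right (hM _ ⟨(hQMD0 x).le, (hQMD1 x).le⟩) (hp0 x)
  have hpoint : ∀ x, h (QT x) * p₀ x + (σ x * p₀ x) * (QMD x - QT x) ≤ h (QMD x) * p₀ x := by
    intro x
    have key := (hσspec x).2.2 (QMD x) ⟨(hQMD0 x).le, (hQMD1 x).le⟩
    have hmul := mul_le_mul_of_nonneg_right key (hp0 x)
    have heq : (h (QT x) + σ x * (QMD x - QT x)) * p₀ x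
        = h (QT x) * p₀ x + (σ x * p₀ x) * (QMD x - QT x) := by ring
    rw [heq] at hmul
    exact hmul
  have hineq1 : ∑' x, h (QT x) * p₀ x ≤ ∑' x, h (QMD x) * p₀ x := by
    have hts := Summable.tsum_le_tsum hpoint (hsumQT.add hsum3) hsumQMD
    rwa [Summable.tsum_add hsumQT hsum3, hzero, add_zero] at hts
  -- ====== second inequality ======
  have hconvIoo : ConvexOn ℝ (Set.Ioo (0:ℝ) 1) h :=
    hconv.subset Set.Ioo_subset_Icc_self (convex_Ioo 0 1)
  have hcont : ContinuousOn h (Set.Ioo 0 1) := hconvIoo.continuousOn isOpen_Ioo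
  have hIntIoo : IntegrableOn h (Set.Ioo 0 1) volume :=
    ⟨hcont.aestronglyMeasurable measurableSet_Ioo,
      HasFiniteIntegral.restrict_of_bounded (C := M)
        (by rw [Real.volume_Ioo]; exact ENNReal.ofReal_lt_top)
        ((ae_restrict_iff' measurableSet_Ioo).2 (ae_of_all _ fun u hu => by
          rw [Real.norm_eq_abs]; exact hM u ⟨hu.1.le, hu.2.le⟩))⟩
  have hIntIcc : IntegrableOn h (Set.Icc 0 1) volume :=
    hIntIoo.congr_set_ae (MeasureTheory.Ioo_ae_eq_Icc).symm
  -- the disjoint intervals attached to the points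
  set s : 𝒳 → Set ℝ := fun x => Set.Ioc (C x) (C x + p₀ x) with hs
  have hsub : ∀ x, s x ⊆ Set.Icc (0:ℝ) 1 := by
    intro x u hu
    exact ⟨(hCnn x).trans hu.1.le, hu.2.trans (hCp x)⟩
  have hCmono : ∀ x y, R x < R y → C x + p₀ x ≤ C y := by
    intro x y hxy
    simp only [hC]
    rw [← hsingle x, ← haddP _ _ (fun z h1 h2 => by subst h2; exact lt_irrefl _ h1)]
    refine hmonoP _ _ (fun z hz => ?_)
    rcases hz with hz | hz
    · omega
    · subst hz; exact hxy
  have hdisj : Pairwise (Function.onFun Disjoint s) := by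
    intro x y hxy
    have hR : R x ≠ R y := fun hR => hxy (hRinj hR)
    simp only [Function.onFun, hs]
    rcases Nat.lt_or_ge (R x) (R y) with hlt | hge
    · have hle := hCmono x y hlt
      exact Set.disjoint_left.2 (fun u hu1 hu2 => absurd hu2.1 (not_lt.2 (hu1.2.trans hle)))
    · have hlt' : R y < R x := lt_of_le_of_ne hge (Ne.symm hR)
      have hle := hCmono y x hlt'
      exact Set.disjoint_left.2 (fun u hu1 hu2 => absurd hu1.1 (not_lt.2 (hu2.2.trans hle)))
  have hmeas : ∀ x, MeasurableSet (s x) := fun x => measurableSet_Ioc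
  have hIntUn : IntegrableOn h (⋃ x, s x) volume :=
    hIntIcc.mono_set (Set.iUnion_subset hsub)
  have hHS : HasSum (fun x => ∫ u in s x, h u) (∫ u in ⋃ x, s x, h u) :=
    hasSum_integral_iUnion hmeas hdisj hIntUn
  -- per-point lower bound on the interval integral, by the supporting line
  have hxineq : ∀ x, h (QMD x) * p₀ x ≤ ∫ u in s x, h u := by
    intro x
    obtain ⟨-, -, hsg⟩ := subgrad_spec hconv (hQMD0 x) (hQMD1 x)
    set sg := subgrad h (QMD x) with hsgdef
    have hab : C x ≤ C x + p₀ x := by linarith [hp0 x]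
    have hIib : IntervalIntegrable h volume (C x) (C x + p₀ x) := by
      rw [intervalIntegrable_iff]
      refine hIntIcc.mono_set (fun u hu => ?_)
      rw [Set.uIoc_of_le hab] at hu
      exact ⟨(hCnn x).trans hu.1.le, hu.2.trans (hCp x)⟩
    have haffine : IntervalIntegrable (fun u => h (QMD x) + sg * (u - QMD x)) volume
        (C x) (C x + p₀ x) :=
      Continuous.intervalIntegrable (continuous_const.add (continuous_const.mul (continuous_id.sub continuous_const))) _ _
    have hmono := intervalIntegral.integral_mono_on hab haffine hIib (fun u hu =>
      hsg u ⟨(hCnn x).trans hu.1, hu.2.trans (hCp x)⟩)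
    have hmm : QMD x = C x + p₀ x / 2 := hQMD' x
    have hcomp : (∫ u in (C x)..(C x + p₀ x), (h (QMD x) + sg * (u - QMD x)))
        = h (QMD x) * p₀ x := by
      have heq2 : (fun u => h (QMD x) + sg * (u - QMD x))
          = fun u => sg * u + (h (QMD x) - sg * QMD x) := by funext u; ring
      rw [heq2, intervalIntegral.integral_add (f := fun u => sg * u)
          ((continuous_const.mul continuous_id').intervalIntegrable _ _)
          intervalIntegrable_const,
        intervalIntegral.integral_const_mul, integral_id,
        intervalIntegral.integral_const, smul_eq_mul, hmm]
      ring
    calc h (QMD x) * p₀ x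
        = ∫ u in (C x)..(C x + p₀ x), (h (QMD x) + sg * (u - QMD x)) := hcomp.symm
      _ ≤ ∫ u in (C x)..(C x + p₀ x), h u := hmono
      _ = ∫ u in s x, h u := by
          rw [intervalIntegral.integral_of_le hab]
  -- the intervals tile (0,1] up to measure zero
  have hvol : volume (⋃ x, s x) = 1 := by
    rw [measure_iUnion hdisj hmeas]
    have hvx : ∀ x, volume (s x) = ENNReal.ofReal (p₀ x) := by
      intro x; simp only [hs]; rw [Real.volume_Ioc]; congr 1; ring
    simp only [hvx]
    rw [← ENNReal.ofReal_tsum_of_nonneg hp0 hsum₀, htot, ENNReal.ofReal_one]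
  have haeeq : (⋃ x, s x) =ᵐ[volume] Set.Ioc (0:ℝ) 1 := by
    refine ae_eq_of_subset_of_measure_ge ?_ ?_ ?_ ?_
    · intro u hu
      obtain ⟨x, hx⟩ := Set.mem_iUnion.1 hu
      exact ⟨lt_of_le_of_lt (hCnn x) hx.1, hx.2.trans (hCp x)⟩
    · rw [Real.volume_Ioc, hvol]; simp
    · exact (MeasurableSet.iUnion hmeas).nullMeasurableSet
    · rw [Real.volume_Ioc]; exact ENNReal.ofReal_ne_top
  have hineq2 : ∑' x, h (QMD x) * p₀ x ≤ ∫ u in (0:ℝ)..1, h u := by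
    have hts := Summable.tsum_le_tsum hxineq hsumQMD hHS.summable
    rw [hHS.tsum_eq] at hts
    rw [intervalIntegral.integral_of_le (by norm_num : (0:ℝ) ≤ 1),
      ← setIntegral_congr_set haeeq]
    exact hts
  exact ⟨hineq1, hineq2⟩
end

section
/- Assume R is injective and agrees with T, p₀(x) > 0 for every x ∈ 𝒳, and T is sufficient for the family. Then for every s ∈ [0,1], ∫₀^s Pr₀{Q^{MD}(X) ≤ α} dα ≥ ∫₀^s Pr₀{Q^T(X) ≤ α} dα; that is, the integrated null CDF of the MD mid-p-value dominates that of the mid-p-value based on T at every point. -/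
open MeasureTheory

lemma aux_integral_ite (s q c : ℝ) (hs : 0 ≤ s) (hq : 0 ≤ q) :
    ∫ a in (0:ℝ)..s, (if q ≤ a then c else 0) = c * max (s - q) 0 := by
  have hfun : (fun a : ℝ => if q ≤ a then c else 0)
      = Set.indicator (Set.Ici q) (fun _ => c) := by
    funext a; by_cases h : q ≤ a <;> simp [Set.indicator, Set.mem_Ici, h]
  rw [intervalIntegral.integral_of_le hs]
  rw [show (fun a : ℝ => if q ≤ a then c else 0) = Set.indicator (Set.Ici q) (fun _ => c) from hfun]
  rw [setIntegral_indicator measurableSet_Ici, setIntegral_const]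
  rcases le_or_gt q s with hqs | hqs
  · have h1 : Set.Ioc q s ⊆ Set.Ioc 0 s ∩ Set.Ici q :=
      fun a ha => ⟨⟨lt_of_le_of_lt hq ha.1, ha.2⟩, le_of_lt ha.1⟩
    have h2 : Set.Ioc 0 s ∩ Set.Ici q ⊆ Set.Icc q s := fun a ha => ⟨ha.2, ha.1.2⟩
    have hv : volume (Set.Ioc 0 s ∩ Set.Ici q) = ENNReal.ofReal (s - q) := by
      apply le_antisymm
      · calc volume (Set.Ioc 0 s ∩ Set.Ici q) ≤ volume (Set.Icc q s) := measure_mono h2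
          _ = ENNReal.ofReal (s - q) := Real.volume_Icc
      · calc ENNReal.ofReal (s - q) = volume (Set.Ioc q s) := Real.volume_Ioc.symm
          _ ≤ _ := measure_mono h1
    rw [Measure.real, hv, ENNReal.toReal_ofReal (by linarith)]
    rw [max_eq_left (by linarith)]
    rw [smul_eq_mul]; ring
  · have h0 : Set.Ioc 0 s ∩ Set.Ici q = ∅ := by
      ext a; simp only [Set.mem_inter_iff, Set.mem_Ioc, Set.mem_Ici, Set.mem_empty_iff_false,
        iff_false]
      rintro ⟨⟨_, h1⟩, h2⟩; linarith
    rw [h0]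
    rw [max_eq_right (by linarith)]
    simp

/-- If `R` is injective and agrees with `T`, `p₀ > 0` everywhere,
and `T` is sufficient for the family, then for every `s ∈ [0,1]`,
`∫₀ˢ Pr₀{Q^{MD}(X) ≤ α} dα ≥ ∫₀ˢ Pr₀{Q^T(X) ≤ α} dα`: the integrated null CDF
of the MD mid-p-value dominates that of the mid-p-value based on `T`. -/
theorem stmt_17 {𝒳 : Type*} [Countable 𝒳] {Θ : Type*}
    (p : Θ → 𝒳 → ℝ) (hp : ∀ θ x, 0 ≤ p θ x) (hpsum : ∀ θ, ∑' x, p θ x = 1)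
    (θ₀ : Θ) (p₀ : 𝒳 → ℝ) (hnull : p θ₀ = p₀)
    (hp₀pos : ∀ x, 0 < p₀ x)
    (T : 𝒳 → ℝ) (R : 𝒳 → ℕ) (hRinj : Function.Injective R)
    (hagree : ∀ x y, T x > T y → R x < R y)
    (hsuff : ∀ (θ : Θ) (x : 𝒳),
      p θ x * (∑' y, if T y = T x then p₀ y else 0)
        = p₀ x * ∑' y, if T y = T x then p θ y else 0)
    (QT QMD : 𝒳 → ℝ)
    (hQT : ∀ x, QT x = (∑' y, if T x < T y then p₀ y else 0)
      + (1/2) * ∑' y, if T y = T x then p₀ y else 0)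
    (hQMD : ∀ x, QMD x = (∑' y, if R y < R x then p₀ y else 0)
      + (1/2) * ∑' y, if R y = R x then p₀ y else 0) :
    ∀ s ∈ Set.Icc (0:ℝ) 1,
      (∫ a in (0:ℝ)..s, ∑' x, if QMD x ≤ a then p₀ x else 0)
        ≥ ∫ a in (0:ℝ)..s, ∑' x, if QT x ≤ a then p₀ x else 0 := by
  classical
  intro s hsmem
  obtain ⟨hs0, hs1⟩ := hsmem
  have hP0 : ∀ x, 0 ≤ p₀ x := fun x => (hp₀pos x).le
  have hPs : Summable p₀ := by
    by_contra h
    have h0 := tsum_eq_zero_of_not_summable h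
    have h1 := hpsum θ₀
    rw [hnull, h0] at h1
    norm_num at h1
  have hP1 : ∑' x, p₀ x = 1 := by rw [← hnull]; exact hpsum θ₀
  -- summability of indicator-type sums
  have hSind : ∀ (Q : 𝒳 → Prop) (inst : ∀ y, Decidable (Q y)),
      Summable (fun y => @ite _ (Q y) (inst y) (p₀ y) 0) := by
    intro Q inst
    apply Summable.of_nonneg_of_le (fun y => ?_) (fun y => ?_) hPs
    · by_cases h : Q y <;> simp [h, hP0 y]
    · by_cases h : Q y <;> simp [h, hP0 y]
  have hindle : ∀ (Q : 𝒳 → Prop) (inst : ∀ y, Decidable (Q y)),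
      (∑' y, @ite _ (Q y) (inst y) (p₀ y) 0) ≤ 1 := by
    intro Q inst
    rw [← hP1]
    apply Summable.tsum_le_tsum (fun y => ?_) (hSind Q inst) hPs
    by_cases h : Q y <;> simp [h, hP0 y]
  have hind0 : ∀ (Q : 𝒳 → Prop) (inst : ∀ y, Decidable (Q y)),
      0 ≤ (∑' y, @ite _ (Q y) (inst y) (p₀ y) 0) := by
    intro Q inst
    apply tsum_nonneg
    intro y
    by_cases h : Q y <;> simp [h, hP0 y]
  -- structural facts about R vs T
  have hsplit : ∀ x y, (R y < R x) ↔ (T x < T y ∨ (T y = T x ∧ R y < R x)) := by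
    intro x y
    constructor
    · intro h
      rcases lt_trichotomy (T x) (T y) with h1 | h1 | h1
      · exact Or.inl h1
      · exact Or.inr ⟨h1.symm, h⟩
      · have := hagree x y h1; omega
    · rintro (h1 | ⟨_, h2⟩)
      · exact hagree y x h1
      · exact h2
  set A : 𝒳 → ℝ := fun x => ∑' y, if T x < T y then p₀ y else 0 with hA
  set B : 𝒳 → ℝ := fun x => ∑' y, if T y = T x ∧ R y < R x then p₀ y else 0 with hB
  set C : 𝒳 → ℝ := fun x => ∑' y, if T y = T x then p₀ y else 0 with hC
  have hQT' : ∀ x, QT x = A x + (1/2) * C x := hQT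
  have hQMD' : ∀ x, QMD x = A x + B x + (1/2) * p₀ x := by
    intro x
    rw [hQMD x]
    have e1 : (∑' y, if R y < R x then p₀ y else 0) = A x + B x := by
      show _ = (∑' y, if T x < T y then p₀ y else 0) + (∑' y, if T y = T x ∧ R y < R x then p₀ y else 0)
      have hs1 : Summable (fun y => if T x < T y then p₀ y else 0) := hSind _ _
      have hs2 : Summable (fun y => if T y = T x ∧ R y < R x then p₀ y else 0) := hSind _ _
      rw [← Summable.tsum_add hs1 hs2]
      apply tsum_congr
      intro y
      by_cases h1 : T x < T y
      · have hr : R y < R x := hagree y x h1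
        have h2 : ¬ T y = T x := ne_of_gt h1
        simp [hr, h1, h2]
      · by_cases h2 : R y < R x
        · have h3 : T y = T x ∧ R y < R x := by
            rcases (hsplit x y).1 h2 with h | h
            · exact absurd h h1
            · exact h
          simp [h2, h1, h3]
        · have h3 : ¬ (T y = T x ∧ R y < R x) := fun hc => h2 hc.2
          simp [h2, h1, h3]
    have e2 : (∑' y, if R y = R x then p₀ y else 0) = p₀ x := by
      have h1 : ∀ y, (if R y = R x then p₀ y else 0) = if y = x then p₀ x else 0 := by
        intro y
        by_cases h : y = x
        · simp [h]
        · have h2 : ¬ R y = R x := fun hr => h (hRinj hr)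
          simp [h, h2]
      rw [tsum_congr h1, tsum_ite_eq]
    rw [e1, e2]
  -- nonnegativity and bounds
  have hA0 : ∀ x, 0 ≤ A x := fun x => hind0 _ _
  have hB0 : ∀ x, 0 ≤ B x := fun x => hind0 _ _
  have hC0 : ∀ x, 0 ≤ C x := fun x => hind0 _ _
  have hA1 : ∀ x, A x ≤ 1 := fun x => hindle _ _
  have hB1 : ∀ x, B x ≤ 1 := fun x => hindle _ _
  have hC1 : ∀ x, C x ≤ 1 := fun x => hindle _ _
  have hPle1 : ∀ x, p₀ x ≤ 1 := by
    intro x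
    rw [← hP1]
    exact Summable.le_tsum hPs x (fun y _ => hP0 y)
  have hQT0 : ∀ x, 0 ≤ QT x := by
    intro x; rw [hQT' x]; nlinarith [hA0 x, hC0 x]
  have hQMD0 : ∀ x, 0 ≤ QMD x := by
    intro x; rw [hQMD' x]; nlinarith [hA0 x, hB0 x, hP0 x]
  have hQTle : ∀ x, QT x ≤ 3/2 := by
    intro x; rw [hQT' x]; nlinarith [hA1 x, hC1 x]
  have hQMDle : ∀ x, QMD x ≤ 5/2 := by
    intro x; rw [hQMD' x]; nlinarith [hA1 x, hB1 x, hPle1 x]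
  -- the integral identity
  have key : ∀ (Q : 𝒳 → ℝ), (∀ x, 0 ≤ Q x) →
      (∫ a in (0:ℝ)..s, ∑' x, if Q x ≤ a then p₀ x else 0)
        = ∑' x, p₀ x * max (s - Q x) 0 := by
    intro Q hQ0
    have hInt : ∀ x, Integrable (fun a => if Q x ≤ a then p₀ x else 0)
        (volume.restrict (Set.Ioc (0:ℝ) s)) := by
      intro x
      have hfun : (fun a : ℝ => if Q x ≤ a then p₀ x else 0)
          = Set.indicator (Set.Ici (Q x)) (fun _ => p₀ x) := by
        funext a; by_cases h : Q x ≤ a <;> simp [Set.indicator, Set.mem_Ici, h]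
      rw [hfun]
      apply Integrable.indicator _ measurableSet_Ici
      exact integrableOn_const (by rw [Real.volume_Ioc]; exact ENNReal.ofReal_ne_top)
    have hval : ∀ x, (∫ a, (if Q x ≤ a then p₀ x else 0) ∂(volume.restrict (Set.Ioc (0:ℝ) s)))
        = p₀ x * max (s - Q x) 0 := by
      intro x
      rw [← intervalIntegral.integral_of_le hs0]
      exact aux_integral_ite s (Q x) (p₀ x) hs0 (hQ0 x)
    have hnormsum : Summable (fun x =>
        ∫ a, ‖if Q x ≤ a then p₀ x else 0‖ ∂(volume.restrict (Set.Ioc (0:ℝ) s))) := by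
      have heq : ∀ x, (∫ a, ‖if Q x ≤ a then p₀ x else 0‖ ∂(volume.restrict (Set.Ioc (0:ℝ) s)))
          = p₀ x * max (s - Q x) 0 := by
        intro x
        rw [show (fun a : ℝ => ‖if Q x ≤ a then p₀ x else 0‖)
            = (fun a : ℝ => if Q x ≤ a then p₀ x else 0) from
          funext fun a => by by_cases h : Q x ≤ a <;> simp [h, abs_of_nonneg (hP0 x)]]
        exact hval x
      apply (summable_congr heq).2
      apply Summable.of_nonneg_of_le (fun x => mul_nonneg (hP0 x) (le_max_right _ _))
        (fun x => mul_le_mul_of_nonneg_left (max_le (by linarith [hQ0 x]) hs0) (hP0 x))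
        (hPs.mul_right s)
    rw [intervalIntegral.integral_of_le hs0]
    rw [← integral_tsum_of_summable_integral_norm hInt hnormsum]
    exact tsum_congr hval
  -- the correction term and its antisymmetry
  set k : 𝒳 → ℝ := fun x => if QT x < s then 1 else 0 with hk
  set w : 𝒳 → 𝒳 → ℝ := fun x y =>
    (if T y = T x ∧ R y < R x then (1:ℝ) else 0) - (1/2) * (if T y = T x then 1 else 0)
      + (1/2) * (if y = x then 1 else 0) with hw
  have hwabs : ∀ x y, |w x y| ≤ 2 := by
    intro x y
    simp only [hw]
    split_ifs <;> rw [abs_le] <;> constructor <;> norm_num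
  have hw0 : ∀ x y, T x ≠ T y → w x y = 0 := by
    intro x y hT
    have h1 : ¬ T y = T x := fun h => hT h.symm
    have h3 : ¬ y = x := fun h => hT (by rw [h])
    simp only [hw]
    simp [h1, h3]
  have hwanti : ∀ x y, T x = T y → w x y + w y x = 0 := by
    intro x y hT
    by_cases hxy : x = y
    · subst hxy
      simp only [hw]
      simp
    · have hR : R x ≠ R y := fun h => hxy (hRinj h)
      have h3 : ¬ y = x := fun h => hxy h.symm
      simp only [hw]
      rcases hR.lt_or_gt with h | h
      · have h4 : ¬ R y < R x := by omega
        simp only [hT.symm, hxy, h3, h, h4, if_true, if_false, and_true, and_false, eq_self_iff_true,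
          ite_true, ite_false]
        norm_num
      · have h4 : ¬ R x < R y := by omega
        simp only [hT.symm, hxy, h3, h, h4, if_true, if_false, and_true, and_false, eq_self_iff_true,
          ite_true, ite_false]
        norm_num
  have hQTdep : ∀ x y, T x = T y → QT x = QT y := by
    intro x y hT
    rw [hQT' x, hQT' y]
    have hAe : A x = A y := by
      simp only [hA]
      exact tsum_congr fun z => by rw [hT]
    have hCe : C x = C y := by
      simp only [hC]
      exact tsum_congr fun z => by rw [hT]
    rw [hAe, hCe]
  have hkdep : ∀ x y, T x = T y → k x = k y := by
    intro x y hT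
    simp only [hk]
    rw [hQTdep x y hT]
  have hFsum : Summable (fun z : 𝒳 × 𝒳 => k z.1 * (p₀ z.1 * (p₀ z.2 * w z.1 z.2))) := by
    apply Summable.of_abs
    apply Summable.of_nonneg_of_le (fun z => abs_nonneg _) (fun z => ?_)
      ((hPs.mul_of_nonneg hPs hP0 hP0).mul_left 2)
    obtain ⟨x, y⟩ := z
    have hk1 : |k x| ≤ 1 := by simp only [hk]; split_ifs <;> norm_num
    have h1 : p₀ y * |w x y| ≤ p₀ y * 2 := mul_le_mul_of_nonneg_left (hwabs x y) (hP0 y)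
    have h2 : p₀ x * (p₀ y * |w x y|) ≤ p₀ x * (p₀ y * 2) := mul_le_mul_of_nonneg_left h1 (hP0 x)
    calc |k x * (p₀ x * (p₀ y * w x y))| = |k x| * (p₀ x * (p₀ y * |w x y|)) := by
          rw [abs_mul, abs_mul, abs_mul, abs_of_nonneg (hP0 x), abs_of_nonneg (hP0 y)]
      _ ≤ 1 * (p₀ x * (p₀ y * 2)) := mul_le_mul hk1 h2 (mul_nonneg (hP0 x) (mul_nonneg (hP0 y) (abs_nonneg _))) one_pos.le
      _ = 2 * (p₀ x * p₀ y) := by ring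
  have hFanti : ∀ x y, k y * (p₀ y * (p₀ x * w y x)) = -(k x * (p₀ x * (p₀ y * w x y))) := by
    intro x y
    by_cases hT : T x = T y
    · have hke := hkdep x y hT
      have h5 := hwanti x y hT
      have hwyx : w y x = -(w x y) := by linarith
      rw [hwyx, ← hke]; ring
    · rw [hw0 x y hT, hw0 y x (fun h => hT h.symm)]; ring
  have hStot : ∑' z : 𝒳 × 𝒳, k z.1 * (p₀ z.1 * (p₀ z.2 * w z.1 z.2)) = 0 := by
    have h1 := (Equiv.prodComm 𝒳 𝒳).tsum_eq
      (fun z : 𝒳 × 𝒳 => k z.1 * (p₀ z.1 * (p₀ z.2 * w z.1 z.2)))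
    have h0 : ∑' z : 𝒳 × 𝒳, (fun z : 𝒳 × 𝒳 => k z.1 * (p₀ z.1 * (p₀ z.2 * w z.1 z.2)))
        ((Equiv.prodComm 𝒳 𝒳) z)
        = ∑' z : 𝒳 × 𝒳, k z.2 * (p₀ z.2 * (p₀ z.1 * w z.2 z.1)) := tsum_congr fun z => rfl
    have h2 : ∑' z : 𝒳 × 𝒳, k z.2 * (p₀ z.2 * (p₀ z.1 * w z.2 z.1))
        = ∑' z : 𝒳 × 𝒳, -(k z.1 * (p₀ z.1 * (p₀ z.2 * w z.1 z.2))) :=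
      tsum_congr fun z => hFanti z.1 z.2
    rw [tsum_neg] at h2
    rw [h0, h2] at h1
    linarith
  have hcform : ∀ x, (∑' y, k x * (p₀ x * (p₀ y * w x y))) = k x * (p₀ x * (QMD x - QT x)) := by
    intro x
    rw [tsum_mul_left, tsum_mul_left]
    congr 1
    congr 1
    have hpt : ∀ y, p₀ y * w x y
        = (if T y = T x ∧ R y < R x then p₀ y else 0)
          - (1/2) * (if T y = T x then p₀ y else 0)
          + (1/2) * (if y = x then p₀ y else 0) := by
      intro y
      simp only [hw]
      by_cases h2 : T y = T x <;> by_cases h4 : R y < R x <;> by_cases h3 : y = x <;>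
        first
          | (exact absurd (by rw [h3]) h2)
          | (simp [h2, h4, h3]; try ring)
    rw [tsum_congr hpt]
    have hs1 : Summable (fun y => if T y = T x ∧ R y < R x then p₀ y else 0) := hSind _ _
    have hs2 : Summable (fun y => (1/2) * if T y = T x then p₀ y else 0) :=
      (hSind _ _).mul_left _
    have hs3 : Summable (fun y => (1/2) * if y = x then p₀ y else 0) :=
      (hSind _ _).mul_left _
    rw [Summable.tsum_add (hs1.sub hs2) hs3, Summable.tsum_sub hs1 hs2, tsum_mul_left, tsum_mul_left]
    have e3 : (∑' y, if y = x then p₀ y else 0) = p₀ x := by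
      rw [tsum_congr (fun y => show (if y = x then p₀ y else 0) = if y = x then p₀ x else 0
        from by by_cases h : y = x <;> simp [h]), tsum_ite_eq]
    rw [e3, hQMD' x, hQT' x]
    simp only [hA, hB, hC]
    ring
  have hcsum : Summable (fun x => k x * (p₀ x * (QMD x - QT x))) := by
    apply Summable.of_abs
    apply Summable.of_nonneg_of_le (fun x => abs_nonneg _) (fun x => ?_) (hPs.mul_left 4)
    have hk1 : |k x| ≤ 1 := by simp only [hk]; split_ifs <;> norm_num
    have hd : |QMD x - QT x| ≤ 4 := by
      rw [abs_le]
      constructor <;> nlinarith [hQMD0 x, hQT0 x, hQMDle x, hQTle x]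
    calc |k x * (p₀ x * (QMD x - QT x))| = |k x| * (p₀ x * |QMD x - QT x|) := by
          rw [abs_mul, abs_mul, abs_of_nonneg (hP0 x)]
      _ ≤ 1 * (p₀ x * 4) :=
          mul_le_mul hk1 (mul_le_mul_of_nonneg_left hd (hP0 x)) (mul_nonneg (hP0 x) (abs_nonneg _)) one_pos.le
      _ = 4 * p₀ x := by ring
  have hczero : ∑' x, k x * (p₀ x * (QMD x - QT x)) = 0 := by
    calc ∑' x, k x * (p₀ x * (QMD x - QT x))
        = ∑' x, ∑' y, k x * (p₀ x * (p₀ y * w x y)) := tsum_congr fun x => (hcform x).symm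
      _ = ∑' z : 𝒳 × 𝒳, k z.1 * (p₀ z.1 * (p₀ z.2 * w z.1 z.2)) := (Summable.tsum_prod hFsum).symm
      _ = 0 := hStot
  have hMsum : ∀ (Q : 𝒳 → ℝ), (∀ x, 0 ≤ Q x) →
      Summable (fun x => p₀ x * max (s - Q x) 0) := by
    intro Q hQ0
    apply Summable.of_nonneg_of_le (fun x => mul_nonneg (hP0 x) (le_max_right _ _))
      (fun x => mul_le_mul_of_nonneg_left (max_le (by linarith [hQ0 x]) hs0) (hP0 x))
      (hPs.mul_right s)
  rw [ge_iff_le, key QT hQT0, key QMD hQMD0]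
  have hptfin : ∀ x, p₀ x * max (s - QT x) 0 - k x * (p₀ x * (QMD x - QT x))
      ≤ p₀ x * max (s - QMD x) 0 := by
    intro x
    by_cases h : QT x < s
    · have hk1 : k x = 1 := by simp [hk, h]
      have h2 : max (s - QT x) 0 = s - QT x := max_eq_left (by linarith)
      have h3 : s - QMD x ≤ max (s - QMD x) 0 := le_max_left _ _
      have h4 := mul_le_mul_of_nonneg_left h3 (hP0 x)
      rw [hk1, h2]
      nlinarith [h4]
    · have hk0 : k x = 0 := by simp [hk, h]
      have h2 : max (s - QT x) 0 = 0 := max_eq_right (by linarith [not_lt.1 h])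
      rw [hk0, h2]
      nlinarith [mul_nonneg (hP0 x) (le_max_right (s - QMD x) 0)]
  calc ∑' x, p₀ x * max (s - QT x) 0
      = ∑' x, (p₀ x * max (s - QT x) 0 - k x * (p₀ x * (QMD x - QT x))) := by
        rw [Summable.tsum_sub (hMsum QT hQT0) hcsum, hczero, sub_zero]
    _ ≤ ∑' x, p₀ x * max (s - QMD x) 0 :=
        Summable.tsum_le_tsum hptfin ((hMsum QT hQT0).sub hcsum) (hMsum QMD hQMD0)
end
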